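/- arXiv:1810.09117 — 6 statements merged into one kernel-verified Lean document; each statement's English description precedes it below -/
import Mathlib

section
/- Let P ⊆ ℂ be a nonempty compact set, and let A : P → ℝ^{n×n} and b_1, …, b_m : P → ℝ^n be continuous. Then the following are equivalent: (i) for every continuous g : P → ℝ^n and every ε > 0 there exist real polynomials q_1, …, q_m ∈ ℝ[z] such that sup_{θ∈P} ‖Σ_{j=1}^m q_j(A(θ)) b_j(θ) − g(θ)‖ < ε; (ii) for every continuous f : P → ℂ^n and every ε > 0 there exist complex polynomials p_1, …, p_m ∈ ℂ[z] such that sup_{θ∈P} ‖Σ_{j=1}^m p_j(A(θ)) b_j(θ) − f(θ)‖ < ε. -/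
open Polynomial Matrix

/-- Every complex polynomial splits into real and imaginary real polynomials. -/
private lemma poly_decomp (p : Polynomial ℂ) :
    ∃ q r : Polynomial ℝ, p = q.map (algebraMap ℝ ℂ) +
      Polynomial.C Complex.I * r.map (algebraMap ℝ ℂ) := by
  induction p using Polynomial.induction_on' with
  | add p₁ p₂ h1 h2 =>
    obtain ⟨q1, r1, e1⟩ := h1
    obtain ⟨q2, r2, e2⟩ := h2
    exact ⟨q1 + q2, r1 + r2, by rw [e1, e2, Polynomial.map_add, Polynomial.map_add]; ring⟩
  | monomial k a =>
    refine ⟨Polynomial.monomial k a.re, Polynomial.monomial k a.im, ?_⟩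
    rw [Polynomial.map_monomial, Polynomial.map_monomial, Polynomial.C_mul_monomial,
      ← (Polynomial.monomial k).map_add]
    congr 1
    simp [mul_comm, Complex.ext_iff]

private lemma aeval_map_real {n : ℕ} (M : Matrix (Fin n) (Fin n) ℝ) (s : Polynomial ℝ) :
    Polynomial.aeval (M.map Complex.ofReal) (s.map (algebraMap ℝ ℂ))
      = (Polynomial.aeval M s).map Complex.ofReal := by
  rw [Polynomial.aeval_map_algebraMap]
  have h := Polynomial.aeval_algHom_apply
    (Complex.ofRealAm.mapMatrix : Matrix (Fin n) (Fin n) ℝ →ₐ[ℝ] Matrix (Fin n) (Fin n) ℂ) M s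
  simpa [AlgHom.mapMatrix_apply, Complex.ofRealAm_coe] using h

/-- Key componentwise computation. -/
private lemma key {n : ℕ} (M : Matrix (Fin n) (Fin n) ℝ) (w : Fin n → ℝ) (q r : Polynomial ℝ)
    (i : Fin n) :
    ((Polynomial.aeval (M.map Complex.ofReal)
        (q.map (algebraMap ℝ ℂ) + Polynomial.C Complex.I * r.map (algebraMap ℝ ℂ))).mulVec
      (fun i => ((w i : ℝ) : ℂ))) i
    = (((Polynomial.aeval M q).mulVec w i : ℝ) : ℂ)
      + Complex.I * (((Polynomial.aeval M r).mulVec w i : ℝ) : ℂ) := by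
  rw [map_add, _root_.map_mul, Polynomial.aeval_C, aeval_map_real, aeval_map_real,
    ← Algebra.smul_def, Matrix.add_mulVec, Matrix.smul_mulVec]
  have hmv : ∀ N : Matrix (Fin n) (Fin n) ℝ,
      ((N.map Complex.ofReal).mulVec (fun i => ((w i : ℝ) : ℂ))) i
        = ((N.mulVec w i : ℝ) : ℂ) := by
    intro N
    exact (RingHom.map_mulVec Complex.ofRealHom N w i).symm
  simp only [Pi.add_apply, Pi.smul_apply, smul_eq_mul, hmv]

/-- A real parameter-dependent pair `(A, B)` (with columns `b_j` of `B`) is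
ensemble reachable on `C(P, ℝ^n)` iff its complexification is ensemble reachable on
`C(P, ℂ^n)`. -/
theorem stmt_0 {n m : ℕ} (P : Set ℂ) (hP : IsCompact P) (hPne : P.Nonempty)
    (A : P → Matrix (Fin n) (Fin n) ℝ) (B : P → Matrix (Fin n) (Fin m) ℝ)
    (hA : Continuous A) (hB : Continuous B) :
    (∀ g : P → Fin n → ℝ, Continuous g → ∀ ε : ℝ, 0 < ε →
        ∃ q : Fin m → Polynomial ℝ, ∀ θ : P,
          ‖(∑ j : Fin m, (Polynomial.aeval (A θ) (q j)).mulVec fun i => B θ i j) - g θ‖ < ε)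
    ↔
    (∀ f : P → Fin n → ℂ, Continuous f → ∀ ε : ℝ, 0 < ε →
        ∃ p : Fin m → Polynomial ℂ, ∀ θ : P,
          ‖(∑ j : Fin m, (Polynomial.aeval ((A θ).map Complex.ofReal) (p j)).mulVec
              fun i => ((B θ i j : ℝ) : ℂ)) - f θ‖ < ε) := by
  constructor
  · intro hreal f hf ε hε
    have hg : Continuous fun θ => fun i => (f θ i).re :=
      continuous_pi fun i => Complex.continuous_re.comp ((continuous_apply i).comp hf)
    have hh : Continuous fun θ => fun i => (f θ i).im :=
      continuous_pi fun i => Complex.continuous_im.comp ((continuous_apply i).comp hf)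
    obtain ⟨q, hq⟩ := hreal _ hg (ε / 2) (by linarith)
    obtain ⟨r, hr⟩ := hreal _ hh (ε / 2) (by linarith)
    refine ⟨fun j => (q j).map (algebraMap ℝ ℂ) +
      Polynomial.C Complex.I * (r j).map (algebraMap ℝ ℂ), fun θ => ?_⟩
    rw [pi_norm_lt_iff hε]
    intro i
    have hcomp : (∑ j : Fin m, (Polynomial.aeval ((A θ).map Complex.ofReal)
          ((q j).map (algebraMap ℝ ℂ) + Polynomial.C Complex.I *
            (r j).map (algebraMap ℝ ℂ))).mulVec fun i => ((B θ i j : ℝ) : ℂ)) i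
        = (((∑ j : Fin m, (Polynomial.aeval (A θ) (q j)).mulVec fun i => B θ i j) i : ℝ) : ℂ)
          + Complex.I *
            (((∑ j : Fin m, (Polynomial.aeval (A θ) (r j)).mulVec fun i => B θ i j) i : ℝ) : ℂ) := by
      simp only [Finset.sum_apply, key]
      push_cast
      rw [Finset.mul_sum, ← Finset.sum_add_distrib]
    have hqi : |((∑ j : Fin m, (Polynomial.aeval (A θ) (q j)).mulVec fun i => B θ i j) i)
        - (f θ i).re| < ε / 2 := by
      have := norm_le_pi_norm ((∑ j : Fin m, (Polynomial.aeval (A θ) (q j)).mulVec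
        fun i => B θ i j) - (fun i => (f θ i).re)) i
      simp only [Pi.sub_apply, Real.norm_eq_abs] at this
      exact lt_of_le_of_lt this (hq θ)
    have hri : |((∑ j : Fin m, (Polynomial.aeval (A θ) (r j)).mulVec fun i => B θ i j) i)
        - (f θ i).im| < ε / 2 := by
      have := norm_le_pi_norm ((∑ j : Fin m, (Polynomial.aeval (A θ) (r j)).mulVec
        fun i => B θ i j) - (fun i => (f θ i).im)) i
      simp only [Pi.sub_apply, Real.norm_eq_abs] at this
      exact lt_of_le_of_lt this (hr θ)
    set a : ℝ := (∑ j : Fin m, (Polynomial.aeval (A θ) (q j)).mulVec fun i => B θ i j) i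
    set b : ℝ := (∑ j : Fin m, (Polynomial.aeval (A θ) (r j)).mulVec fun i => B θ i j) i
    have herr : ((∑ j : Fin m, (Polynomial.aeval ((A θ).map Complex.ofReal)
          ((q j).map (algebraMap ℝ ℂ) + Polynomial.C Complex.I *
            (r j).map (algebraMap ℝ ℂ))).mulVec fun i => ((B θ i j : ℝ) : ℂ)) - f θ) i
        = ((a - (f θ i).re : ℝ) : ℂ) + ((b - (f θ i).im : ℝ) : ℂ) * Complex.I := by
      rw [Pi.sub_apply, hcomp]
      apply Complex.ext <;> simp
    rw [herr]
    calc ‖((a - (f θ i).re : ℝ) : ℂ) + ((b - (f θ i).im : ℝ) : ℂ) * Complex.I‖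
        ≤ ‖((a - (f θ i).re : ℝ) : ℂ)‖ + ‖((b - (f θ i).im : ℝ) : ℂ) * Complex.I‖ :=
          norm_add_le _ _
      _ = |a - (f θ i).re| + |b - (f θ i).im| := by
          rw [norm_mul, Complex.norm_I, mul_one, Complex.norm_real, Complex.norm_real,
            Real.norm_eq_abs, Real.norm_eq_abs]
      _ < ε / 2 + ε / 2 := add_lt_add hqi hri
      _ = ε := by ring
  · intro hcplx g hg ε hε
    have hf : Continuous fun θ => fun i => ((g θ i : ℝ) : ℂ) :=
      continuous_pi fun i => Complex.continuous_ofReal.comp ((continuous_apply i).comp hg)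
    obtain ⟨p, hp⟩ := hcplx _ hf ε hε
    choose q r hqr using fun j => poly_decomp (p j)
    refine ⟨q, fun θ => ?_⟩
    rw [pi_norm_lt_iff hε]
    intro i
    have hpt := hp θ
    have hpti := lt_of_le_of_lt (norm_le_pi_norm _ i) hpt
    have hterm : ∀ j : Fin m, ((Polynomial.aeval ((A θ).map Complex.ofReal) (p j)).mulVec
          fun i => ((B θ i j : ℝ) : ℂ)) i
        = (((Polynomial.aeval (A θ) (q j)).mulVec (fun i => B θ i j) i : ℝ) : ℂ)
          + Complex.I * (((Polynomial.aeval (A θ) (r j)).mulVec (fun i => B θ i j) i : ℝ) : ℂ) :=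
      fun j => by rw [hqr j]; exact key (A θ) (fun i => B θ i j) (q j) (r j) i
    have hsum : (∑ j : Fin m, (Polynomial.aeval ((A θ).map Complex.ofReal) (p j)).mulVec
          fun i => ((B θ i j : ℝ) : ℂ)) i
        = (((∑ j : Fin m, (Polynomial.aeval (A θ) (q j)).mulVec fun i => B θ i j) i : ℝ) : ℂ)
          + Complex.I *
            (((∑ j : Fin m, (Polynomial.aeval (A θ) (r j)).mulVec fun i => B θ i j) i : ℝ) : ℂ) := by
      simp only [Finset.sum_apply, hterm]
      push_cast
      rw [Finset.mul_sum, ← Finset.sum_add_distrib]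
    set a : ℝ := (∑ j : Fin m, (Polynomial.aeval (A θ) (q j)).mulVec fun i => B θ i j) i with ha
    set b : ℝ := (∑ j : Fin m, (Polynomial.aeval (A θ) (r j)).mulVec fun i => B θ i j) i with hb
    have herr : ((∑ j : Fin m, (Polynomial.aeval ((A θ).map Complex.ofReal) (p j)).mulVec
          fun i => ((B θ i j : ℝ) : ℂ)) - fun i => ((g θ i : ℝ) : ℂ)) i
        = ((a - g θ i : ℝ) : ℂ) + ((b : ℝ) : ℂ) * Complex.I := by
      rw [Pi.sub_apply, hsum]
      push_cast
      ring
    have hre : ‖(((∑ j : Fin m, (Polynomial.aeval (A θ) (q j)).mulVec fun i => B θ i j)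
        - g θ) i)‖ = |a - g θ i| := by
      rw [Pi.sub_apply, Real.norm_eq_abs, ← ha]
    rw [hre]
    have : |a - g θ i| ≤ ‖((a - g θ i : ℝ) : ℂ) + ((b : ℝ) : ℂ) * Complex.I‖ := by
      have habs := Complex.abs_re_le_norm (((a - g θ i : ℝ) : ℂ) + ((b : ℝ) : ℂ) * Complex.I)
      simpa using habs
    rw [herr] at hpti
    exact lt_of_le_of_lt this hpti
end

section
/- Let P ⊆ ℂ be a nonempty compact set, let n_1, …, n_N and m_1, …, m_N be positive integers with n̄ = n_1 + ⋯ + n_N and m̄ = m_1 + ⋯ + m_N, and let A_{ij} : P → ℂ^{n_i×n_j} and B_{ij} : P → ℂ^{n_i×m_j} for 1 ≤ i ≤ j ≤ N be continuous. Define the upper block-triangular continuous maps A : P → ℂ^{n̄×n̄} and B : P → ℂ^{n̄×m̄} whose (i,j)-blocks are A_{ij}(θ) and B_{ij}(θ) for i ≤ j and are zero for i > j. If every diagonal pair (A_{ii}, B_{ii}) is uniformly ensemble reachable on C(P, ℂ^{n_i}), then the pair (A, B) is uniformly ensemble reachable on C(P, ℂ^{n̄}). -/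
open Polynomial Matrix

/-- A pair `(A, B)` of matrix-valued families on a parameter set `P ⊆ ℂ` is uniformly
ensemble reachable on `C(P, ℂ^ι)`: every continuous target can be approximated in the
supremum norm by `∑_j p_j(A(θ)) b_j(θ)` with polynomials `p_j` applied to the columns of
`B`. -/
def UniformEnsembleReachable {ι κ : Type*} [Fintype ι] [DecidableEq ι] [Fintype κ]
    (P : Set ℂ) (A : P → Matrix ι ι ℂ) (B : P → Matrix ι κ ℂ) : Prop :=
  ∀ f : P → ι → ℂ, Continuous f → ∀ ε : ℝ, 0 < ε →
    ∃ p : κ → Polynomial ℂ, ∀ θ : P,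
      ‖(∑ j : κ, (Polynomial.aeval (A θ) (p j)).mulVec fun i => B θ i j) - f θ‖ < ε

private lemma my_sum_mulVec {ι κ γ : Type*} [Fintype ι] [Fintype κ] (s : Finset γ)
    (M : γ → Matrix κ ι ℂ) (v : ι → ℂ) :
    (∑ k ∈ s, M k) *ᵥ v = ∑ k ∈ s, (M k) *ᵥ v := by
  ext i
  simp [Matrix.mulVec, dotProduct, Matrix.sum_apply, Finset.sum_mul]
  rw [Finset.sum_comm]

section TwoBlock

variable {ι₁ ι₂ κ₁ κ₂ : Type*} [Fintype ι₁] [Fintype ι₂] [DecidableEq ι₁] [DecidableEq ι₂]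
  [Fintype κ₁] [Fintype κ₂]

private lemma pow_mulVec_inr (A : Matrix (ι₁ ⊕ ι₂) (ι₁ ⊕ ι₂) ℂ)
    (hA : ∀ a b, A (Sum.inr a) (Sum.inl b) = 0) (v : ι₁ ⊕ ι₂ → ℂ) (k : ℕ) :
    (fun a => ((A ^ k) *ᵥ v) (Sum.inr a)) =
      ((Matrix.of fun a b => A (Sum.inr a) (Sum.inr b)) ^ k) *ᵥ (fun b => v (Sum.inr b)) := by
  induction k generalizing v with
  | zero => funext a; simp
  | succ k ih =>
    funext a
    rw [pow_succ', ← Matrix.mulVec_mulVec, pow_succ', ← Matrix.mulVec_mulVec]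
    have h2 : (A *ᵥ ((A ^ k) *ᵥ v)) (Sum.inr a)
        = ∑ b : ι₂, A (Sum.inr a) (Sum.inr b) * ((A ^ k) *ᵥ v) (Sum.inr b) := by
      simp [Matrix.mulVec, dotProduct, Fintype.sum_sum_type, hA]
    rw [h2, ← ih v]
    simp [Matrix.mulVec, dotProduct]

private lemma pow_mulVec_inr_zero (A : Matrix (ι₁ ⊕ ι₂) (ι₁ ⊕ ι₂) ℂ)
    (hA : ∀ a b, A (Sum.inr a) (Sum.inl b) = 0) (v : ι₁ ⊕ ι₂ → ℂ)
    (hv : ∀ b, v (Sum.inr b) = 0) (k : ℕ) (a : ι₂) :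
    ((A ^ k) *ᵥ v) (Sum.inr a) = 0 := by
  rw [congrFun (pow_mulVec_inr A hA v k) a,
    show (fun b => v (Sum.inr b)) = (0 : ι₂ → ℂ) from funext hv, Matrix.mulVec_zero]
  rfl

private lemma pow_mulVec_inl (A : Matrix (ι₁ ⊕ ι₂) (ι₁ ⊕ ι₂) ℂ)
    (hA : ∀ a b, A (Sum.inr a) (Sum.inl b) = 0) (v : ι₁ ⊕ ι₂ → ℂ)
    (hv : ∀ b, v (Sum.inr b) = 0) (k : ℕ) :
    (fun a => ((A ^ k) *ᵥ v) (Sum.inl a)) =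
      ((Matrix.of fun a b => A (Sum.inl a) (Sum.inl b)) ^ k) *ᵥ (fun b => v (Sum.inl b)) := by
  induction k with
  | zero => funext a; simp
  | succ k ih =>
    funext a
    rw [pow_succ', ← Matrix.mulVec_mulVec, pow_succ', ← Matrix.mulVec_mulVec]
    have h2 : (A *ᵥ ((A ^ k) *ᵥ v)) (Sum.inl a)
        = ∑ b : ι₁, A (Sum.inl a) (Sum.inl b) * ((A ^ k) *ᵥ v) (Sum.inl b) := by
      set w := (A ^ k) *ᵥ v with hw
      have hzero : ∀ b, w (Sum.inr b) = 0 := pow_mulVec_inr_zero A hA v hv k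
      simp [Matrix.mulVec, dotProduct, Fintype.sum_sum_type, hzero]
    rw [h2, ← ih]
    simp [Matrix.mulVec, dotProduct]

private lemma aeval_mulVec_inr (A : Matrix (ι₁ ⊕ ι₂) (ι₁ ⊕ ι₂) ℂ)
    (hA : ∀ a b, A (Sum.inr a) (Sum.inl b) = 0) (v : ι₁ ⊕ ι₂ → ℂ) (p : ℂ[X]) :
    (fun a => ((aeval A p) *ᵥ v) (Sum.inr a)) =
      (aeval (Matrix.of fun a b => A (Sum.inr a) (Sum.inr b)) p) *ᵥ (fun b => v (Sum.inr b)) := by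
  funext a
  rw [Polynomial.aeval_eq_sum_range (p := p) A,
    Polynomial.aeval_eq_sum_range (p := p) (Matrix.of fun a b => A (Sum.inr a) (Sum.inr b))]
  simp only [Matrix.smul_mulVec, my_sum_mulVec, Finset.sum_apply, Pi.smul_apply]
  refine Finset.sum_congr rfl fun k _ => ?_
  rw [congrFun (pow_mulVec_inr A hA v k) a]

private lemma aeval_mulVec_inr_zero (A : Matrix (ι₁ ⊕ ι₂) (ι₁ ⊕ ι₂) ℂ)
    (hA : ∀ a b, A (Sum.inr a) (Sum.inl b) = 0) (v : ι₁ ⊕ ι₂ → ℂ)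
    (hv : ∀ b, v (Sum.inr b) = 0) (p : ℂ[X]) (a : ι₂) :
    ((aeval A p) *ᵥ v) (Sum.inr a) = 0 := by
  rw [congrFun (aeval_mulVec_inr A hA v p) a,
    show (fun b => v (Sum.inr b)) = (0 : ι₂ → ℂ) from funext hv, Matrix.mulVec_zero]
  rfl

private lemma aeval_mulVec_inl (A : Matrix (ι₁ ⊕ ι₂) (ι₁ ⊕ ι₂) ℂ)
    (hA : ∀ a b, A (Sum.inr a) (Sum.inl b) = 0) (v : ι₁ ⊕ ι₂ → ℂ)
    (hv : ∀ b, v (Sum.inr b) = 0) (p : ℂ[X]) :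
    (fun a => ((aeval A p) *ᵥ v) (Sum.inl a)) =
      (aeval (Matrix.of fun a b => A (Sum.inl a) (Sum.inl b)) p) *ᵥ (fun b => v (Sum.inl b)) := by
  funext a
  rw [Polynomial.aeval_eq_sum_range (p := p) A,
    Polynomial.aeval_eq_sum_range (p := p) (Matrix.of fun a b => A (Sum.inl a) (Sum.inl b))]
  simp only [Matrix.smul_mulVec, my_sum_mulVec, Finset.sum_apply, Pi.smul_apply]
  refine Finset.sum_congr rfl fun k _ => ?_
  rw [congrFun (pow_mulVec_inl A hA v hv k) a]

end TwoBlock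

private lemma continuous_aeval_mulVec {ι κ : Type*} [Fintype ι] [DecidableEq ι]
    {P : Set ℂ} {A : P → Matrix ι ι ℂ} {B : P → Matrix ι κ ℂ}
    (hA : Continuous A) (hB : Continuous B) (p : ℂ[X]) (j : κ) (a : ι) :
    Continuous fun θ => ((aeval (A θ) p) *ᵥ fun i => B θ i j) a := by
  simp only [Matrix.mulVec, dotProduct]
  exact continuous_finset_sum _ fun i _ =>
    (((Polynomial.continuous_aeval p).comp hA).matrix_elem a i).mul (hB.matrix_elem i j)

private lemma uer_sum {ι₁ ι₂ κ₁ κ₂ : Type*} [Fintype ι₁] [Fintype ι₂]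
    [DecidableEq ι₁] [DecidableEq ι₂] [Fintype κ₁] [Fintype κ₂] {P : Set ℂ}
    (A : P → Matrix (ι₁ ⊕ ι₂) (ι₁ ⊕ ι₂) ℂ) (B : P → Matrix (ι₁ ⊕ ι₂) (κ₁ ⊕ κ₂) ℂ)
    (hA : Continuous A) (hB : Continuous B)
    (hAtri : ∀ θ a b, A θ (Sum.inr a) (Sum.inl b) = 0)
    (hBtri : ∀ θ a b, B θ (Sum.inr a) (Sum.inl b) = 0)
    (h1 : UniformEnsembleReachable P
        (fun θ => Matrix.of fun a b => A θ (Sum.inl a) (Sum.inl b))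
        (fun θ => Matrix.of fun a b => B θ (Sum.inl a) (Sum.inl b)))
    (h2 : UniformEnsembleReachable P
        (fun θ => Matrix.of fun a b => A θ (Sum.inr a) (Sum.inr b))
        (fun θ => Matrix.of fun a b => B θ (Sum.inr a) (Sum.inr b))) :
    UniformEnsembleReachable P A B := by
  intro f hf ε hε
  obtain ⟨q, hq⟩ := h2 (fun θ b => f θ (Sum.inr b))
    (continuous_pi fun b => (continuous_apply _).comp hf) ε hε
  set g : P → ι₁ → ℂ := fun θ a =>
    ∑ j : κ₂, ((aeval (A θ) (q j)) *ᵥ fun i => B θ i (Sum.inr j)) (Sum.inl a) with hgdef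
  have hg : Continuous g := continuous_pi fun a =>
    continuous_finset_sum _ fun j _ => continuous_aeval_mulVec hA hB (q j) (Sum.inr j) (Sum.inl a)
  obtain ⟨r, hr⟩ := h1 (fun θ a => f θ (Sum.inl a) - g θ a)
    ((continuous_pi fun a => (continuous_apply _).comp hf).sub hg) ε hε
  refine ⟨Sum.elim r q, fun θ => (pi_norm_lt_iff hε).2 fun i => ?_⟩
  have hsplit : (∑ j : κ₁ ⊕ κ₂,
        (aeval (A θ) (Sum.elim r q j)) *ᵥ fun i => B θ i j)
      = (∑ j : κ₁, (aeval (A θ) (r j)) *ᵥ fun i => B θ i (Sum.inl j))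
        + ∑ j : κ₂, (aeval (A θ) (q j)) *ᵥ fun i => B θ i (Sum.inr j) :=
    Fintype.sum_sum_type _
  rw [Pi.sub_apply, hsplit, Pi.add_apply]
  cases i with
  | inl a =>
    have e1 : (∑ j : κ₁, (aeval (A θ) (r j)) *ᵥ fun i => B θ i (Sum.inl j)) (Sum.inl a)
        = (∑ j : κ₁, (aeval (Matrix.of fun a b => A θ (Sum.inl a) (Sum.inl b)) (r j)) *ᵥ
            fun i => Matrix.of (fun a b => B θ (Sum.inl a) (Sum.inl b)) i j) a := by
      rw [Finset.sum_apply, Finset.sum_apply]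
      exact Finset.sum_congr rfl fun j _ =>
        congrFun (aeval_mulVec_inl (A θ) (hAtri θ) _ (fun b => hBtri θ b j) (r j)) a
    have e2 : (∑ j : κ₂, (aeval (A θ) (q j)) *ᵥ fun i => B θ i (Sum.inr j)) (Sum.inl a)
        = g θ a := by
      rw [Finset.sum_apply, hgdef]
    rw [e1, e2]
    have h := (pi_norm_lt_iff hε).1 (hr θ) a
    simp only [Pi.sub_apply] at h
    rw [show ∀ x y z : ℂ, x + y - z = x - (z - y) from fun x y z => by ring]
    exact h
  | inr a =>
    have hz : (∑ j : κ₁, (aeval (A θ) (r j)) *ᵥ fun i => B θ i (Sum.inl j)) (Sum.inr a) = 0 := by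
      rw [Finset.sum_apply]
      exact Finset.sum_eq_zero fun j _ =>
        aeval_mulVec_inr_zero (A θ) (hAtri θ) _ (fun b => hBtri θ b j) (r j) a
    have hv2 : (∑ j : κ₂, (aeval (A θ) (q j)) *ᵥ fun i => B θ i (Sum.inr j)) (Sum.inr a)
        = (∑ j : κ₂, (aeval (Matrix.of fun a b => A θ (Sum.inr a) (Sum.inr b)) (q j)) *ᵥ
            fun i => Matrix.of (fun a b => B θ (Sum.inr a) (Sum.inr b)) i j) a := by
      rw [Finset.sum_apply, Finset.sum_apply]
      exact Finset.sum_congr rfl fun j _ =>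
        congrFun (aeval_mulVec_inr (A θ) (hAtri θ) _ (q j)) a
    rw [hz, zero_add, hv2]
    have h := (pi_norm_lt_iff hε).1 (hq θ) a
    simp only [Pi.sub_apply] at h
    exact h

private lemma uer_reindex {ι ι' κ κ' : Type*} [Fintype ι] [DecidableEq ι] [Fintype κ]
    [Fintype ι'] [DecidableEq ι'] [Fintype κ'] {P : Set ℂ} (e : ι' ≃ ι) (g : κ' ≃ κ)
    {A : P → Matrix ι ι ℂ} {B : P → Matrix ι κ ℂ}
    (h : UniformEnsembleReachable P A B) :
    UniformEnsembleReachable P (fun θ => (A θ).submatrix e e)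
      (fun θ => (B θ).submatrix e g) := by
  intro f hf ε hε
  obtain ⟨p, hp⟩ := h (fun θ i => f θ (e.symm i))
    (continuous_pi fun i => (continuous_apply _).comp hf) ε hε
  refine ⟨fun j' => p (g j'), fun θ => (pi_norm_lt_iff hε).2 fun i' => ?_⟩
  have hsub : ∀ q : ℂ[X], aeval ((A θ).submatrix e e) q = (aeval (A θ) q).submatrix e e := by
    intro q
    have h0 : (A θ).submatrix ⇑e ⇑e = Matrix.reindexAlgEquiv ℂ ℂ e.symm (A θ) := by
      rw [Matrix.reindexAlgEquiv_apply, Matrix.reindex_apply]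
      simp
    rw [h0, Polynomial.aeval_algHom_apply (Matrix.reindexAlgEquiv ℂ ℂ e.symm) (A θ) q,
      Matrix.reindexAlgEquiv_apply, Matrix.reindex_apply]
    simp
  have key : (∑ j' : κ', (aeval ((A θ).submatrix e e) (p (g j'))) *ᵥ
        fun i => (B θ).submatrix e g i j') i'
      = (∑ j : κ, (aeval (A θ) (p j)) *ᵥ fun i => B θ i j) (e i') := by
    rw [Finset.sum_apply, Finset.sum_apply]
    rw [← Equiv.sum_comp g (fun j => ((aeval (A θ) (p j)) *ᵥ fun i => B θ i j) (e i'))]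
    refine Finset.sum_congr rfl fun j' _ => ?_
    rw [hsub]
    have := congrFun (Matrix.submatrix_mulVec_equiv (aeval (A θ) (p (g j')))
      (fun i => (B θ).submatrix e g i j') e e) i'
    rw [this]
    simp only [Function.comp_apply, Matrix.submatrix_apply]
    congr 1
    funext i
    simp
  rw [Pi.sub_apply, key]
  have := (pi_norm_lt_iff hε).1 (hp θ) (e i')
  simpa using this

/-- if all diagonal pairs of an upper block-triangular pair `(A, B)`
(blocks indexed by `Fin N`, block sizes `n i` resp. `m i`) are uniformly ensemble
reachable, then so is `(A, B)`. -/
theorem stmt_1 {N : ℕ} (P : Set ℂ) (hP : IsCompact P) (hPne : P.Nonempty)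
    (n m : Fin N → ℕ) (hn : ∀ i, 0 < n i) (hm : ∀ i, 0 < m i)
    (A : P → Matrix ((i : Fin N) × Fin (n i)) ((i : Fin N) × Fin (n i)) ℂ)
    (B : P → Matrix ((i : Fin N) × Fin (n i)) ((i : Fin N) × Fin (m i)) ℂ)
    (hA : Continuous A) (hB : Continuous B)
    (hAtri : ∀ (θ : P) (a b : (i : Fin N) × Fin (n i)), b.1 < a.1 → A θ a b = 0)
    (hBtri : ∀ (θ : P) (a : (i : Fin N) × Fin (n i)) (b : (i : Fin N) × Fin (m i)),
      b.1 < a.1 → B θ a b = 0)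
    (hdiag : ∀ i : Fin N,
      UniformEnsembleReachable P
        (fun θ => Matrix.of fun a b : Fin (n i) => A θ ⟨i, a⟩ ⟨i, b⟩)
        (fun θ => Matrix.of fun (a : Fin (n i)) (b : Fin (m i)) => B θ ⟨i, a⟩ ⟨i, b⟩)) :
    UniformEnsembleReachable P A B := by
  clear hP hPne hn hm
  revert n m A B hA hB hAtri hBtri hdiag
  induction N with
  | zero =>
    intro n m A B hA hB hAtri hBtri hdiag
    intro f hf ε hε
    exact ⟨fun _ => 0, fun θ => (pi_norm_lt_iff hε).2 fun i => i.1.elim0⟩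
  | succ N ih =>
    intro n m A B hA hB hAtri hBtri hdiag
    let eι : ((i : Fin (N + 1)) × Fin (n i)) ≃ (Fin (n 0) ⊕ ((i : Fin N) × Fin (n i.succ))) :=
      { toFun := fun x => Fin.cases
          (motive := fun i => Fin (n i) → (Fin (n 0) ⊕ ((i : Fin N) × Fin (n i.succ))))
          (fun a => Sum.inl a) (fun i a => Sum.inr ⟨i, a⟩) x.1 x.2
        invFun := Sum.elim (fun a => ⟨0, a⟩) (fun x => ⟨x.1.succ, x.2⟩)
        left_inv := by
          rintro ⟨i, a⟩
          induction i using Fin.cases with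
          | zero => simp
          | succ i => simp
        right_inv := by rintro (a | ⟨i, a⟩) <;> simp }
    let eκ : ((i : Fin (N + 1)) × Fin (m i)) ≃ (Fin (m 0) ⊕ ((i : Fin N) × Fin (m i.succ))) :=
      { toFun := fun x => Fin.cases
          (motive := fun i => Fin (m i) → (Fin (m 0) ⊕ ((i : Fin N) × Fin (m i.succ))))
          (fun a => Sum.inl a) (fun i a => Sum.inr ⟨i, a⟩) x.1 x.2
        invFun := Sum.elim (fun a => ⟨0, a⟩) (fun x => ⟨x.1.succ, x.2⟩)
        left_inv := by
          rintro ⟨i, a⟩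
          induction i using Fin.cases with
          | zero => simp
          | succ i => simp
        right_inv := by rintro (a | ⟨i, a⟩) <;> simp }
    have hmain : UniformEnsembleReachable P
        (fun θ => (A θ).submatrix eι.symm eι.symm)
        (fun θ => (B θ).submatrix eι.symm eκ.symm) := by
      apply uer_sum
      · exact continuous_matrix fun a b => hA.matrix_elem _ _
      · exact continuous_matrix fun a b => hB.matrix_elem _ _
      · intro θ a b
        exact hAtri θ _ _ (Fin.succ_pos a.1)
      · intro θ a b
        exact hBtri θ _ _ (Fin.succ_pos a.1)
      · exact hdiag 0
      · exact ih (fun i => n i.succ) (fun i => m i.succ)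
          (fun θ => Matrix.of fun a b => A θ ⟨a.1.succ, a.2⟩ ⟨b.1.succ, b.2⟩)
          (fun θ => Matrix.of fun a b => B θ ⟨a.1.succ, a.2⟩ ⟨b.1.succ, b.2⟩)
          (continuous_matrix fun a b => hA.matrix_elem _ _)
          (continuous_matrix fun a b => hB.matrix_elem _ _)
          (fun θ a b hlt => hAtri θ _ _ (Fin.succ_lt_succ_iff.mpr hlt))
          (fun θ a b hlt => hBtri θ _ _ (Fin.succ_lt_succ_iff.mpr hlt))
          (fun i => hdiag i.succ)
    have hAeq : (fun θ => ((A θ).submatrix eι.symm eι.symm).submatrix eι eι) = A := by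
      funext θ
      rw [Matrix.submatrix_submatrix]
      simp [Equiv.symm_comp_self]
    have hBeq : (fun θ => ((B θ).submatrix eι.symm eκ.symm).submatrix eι eκ) = B := by
      funext θ
      rw [Matrix.submatrix_submatrix]
      simp [Equiv.symm_comp_self]
    rw [← hAeq, ← hBeq]
    exact uer_reindex eι eκ hmain
end

section
/- Let P ⊆ ℂ be compact and let A : P → ℂ^{n×n} and b : P → ℂ^n be continuous such that for every θ ∈ P the Kalman matrix T(θ) := (b(θ), A(θ)b(θ), …, A(θ)^{n−1}b(θ)) has rank n. Then T(θ) is invertible for all θ ∈ P; writing the characteristic polynomial of A(θ) as χ_{A(θ)}(z) = z^n − a_{n−1}(θ) z^{n−1} − ⋯ − a_0(θ), one has T(θ)^{−1} A(θ) T(θ) = A_c(θ), where A_c(θ) is the companion-type matrix whose subdiagonal entries are 1, whose last column is (a_0(θ), a_1(θ), …, a_{n−1}(θ))^T, and whose remaining entries are 0, and T(θ)^{−1} b(θ) = e_1, the first standard basis vector. Moreover, the pair (A, b) is uniformly ensemble reachable on C(P, ℂ^n) if and only if the pair (A_c, e_1) is uniformly ensemble reachable on C(P, ℂ^n). -/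
open Polynomial Matrix

/-- Uniform ensemble reachability of a single-input pair `(A, b)` on `C(P, ℂ^n)`. -/
def UniformEnsembleReachable1 {n : ℕ} (P : Set ℂ)
    (A : P → Matrix (Fin n) (Fin n) ℂ) (b : P → Fin n → ℂ) : Prop :=
  ∀ f : P → Fin n → ℂ, Continuous f → ∀ ε : ℝ, 0 < ε →
    ∃ p : Polynomial ℂ, ∀ θ : P, ‖(Polynomial.aeval (A θ) p).mulVec (b θ) - f θ‖ < ε

lemma my_isUnit_of_rank {n : ℕ} (M : Matrix (Fin n) (Fin n) ℂ) (h : M.rank = n) : IsUnit M := by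
  have hsurj : Function.Surjective M.mulVecLin := by
    rw [← LinearMap.range_eq_top]
    apply Submodule.eq_top_of_finrank_eq
    rw [← Matrix.rank, h, Module.finrank_pi]
    simp
  choose g hg using fun j => hsurj (Pi.single j 1)
  apply (Matrix.isUnit_iff_isUnit_det _).mpr (Matrix.isUnit_det_of_right_inverse (B := Matrix.of fun i j => g j i) ?_)
  ext i j
  have := congrFun (hg j) i
  simpa [Matrix.mul_apply, Matrix.mulVecLin_apply, Matrix.mulVec, dotProduct,
    Matrix.one_apply, Pi.single_apply, eq_comm] using this

lemma myconj_pow {n : ℕ} (S Si A : Matrix (Fin n) (Fin n) ℂ) (h1 : Si * S = 1) (h2 : S * Si = 1)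
    (k : ℕ) : (Si * A * S) ^ k = Si * A ^ k * S := by
  induction k with
  | zero => simp [h1]
  | succ k ih =>
      rw [pow_succ, ih, pow_succ]
      calc Si * A ^ k * S * (Si * A * S) = Si * A ^ k * (S * Si) * A * S := by
            simp only [Matrix.mul_assoc]
        _ = Si * (A ^ k * A) * S := by rw [h2]; simp only [Matrix.mul_assoc, Matrix.one_mul]

lemma myaeval_conj {n : ℕ} (S Si A : Matrix (Fin n) (Fin n) ℂ) (h1 : Si * S = 1) (h2 : S * Si = 1)
    (p : Polynomial ℂ) : aeval (Si * A * S) p = Si * aeval A p * S := by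
  induction p using Polynomial.induction_on' with
  | add p q hp hq => rw [map_add, map_add, hp, hq, Matrix.mul_add, Matrix.add_mul]
  | monomial k c =>
      rw [aeval_monomial, aeval_monomial, myconj_pow S Si A h1 h2]
      simp only [← Matrix.mul_assoc]
      rw [Algebra.commutes c Si]

lemma mymulVec_norm_le {n : ℕ} (M : Matrix (Fin n) (Fin n) ℂ) (v : Fin n → ℂ) :
    ‖M.mulVec v‖ ≤ (∑ i, ∑ j, ‖M i j‖) * ‖v‖ := by
  have hnn : 0 ≤ (∑ i, ∑ j, ‖M i j‖) * ‖v‖ :=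
    mul_nonneg (Finset.sum_nonneg fun i _ => Finset.sum_nonneg fun j _ => norm_nonneg _)
      (norm_nonneg _)
  rw [pi_norm_le_iff_of_nonneg hnn]
  intro i
  have h0 : M.mulVec v i = ∑ j, M i j * v j := rfl
  calc ‖M.mulVec v i‖ ≤ ∑ j, ‖M i j * v j‖ := by rw [h0]; exact norm_sum_le _ _
    _ ≤ ∑ j, ‖M i j‖ * ‖v‖ := by
        refine Finset.sum_le_sum fun j _ => ?_
        rw [norm_mul]
        exact mul_le_mul_of_nonneg_left (norm_le_pi_norm v j) (norm_nonneg _)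
    _ = (∑ j, ‖M i j‖) * ‖v‖ := by rw [Finset.sum_mul]
    _ ≤ (∑ i, ∑ j, ‖M i j‖) * ‖v‖ := by
        apply mul_le_mul_of_nonneg_right _ (norm_nonneg _)
        exact Finset.single_le_sum (f := fun i => ∑ j, ‖M i j‖)
          (fun i _ => Finset.sum_nonneg fun j _ => norm_nonneg _) (Finset.mem_univ i)

lemma mytransfer {n : ℕ} (P : Set ℂ) (hP : IsCompact P)
    (A B : P → Matrix (Fin n) (Fin n) ℂ) (b c : P → Fin n → ℂ)
    (S Si : P → Matrix (Fin n) (Fin n) ℂ)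
    (h1 : ∀ θ, Si θ * S θ = 1) (h2 : ∀ θ, S θ * Si θ = 1)
    (hScont : Continuous S) (hSicont : Continuous Si)
    (hconj : ∀ θ, B θ = Si θ * A θ * S θ)
    (hvec : ∀ θ, c θ = (Si θ).mulVec (b θ))
    (h : UniformEnsembleReachable1 P A b) : UniformEnsembleReachable1 P B c := by
  intro f hf ε hε
  haveI : CompactSpace P := isCompact_iff_compactSpace.mp hP
  set K : P → ℝ := fun θ => ∑ i, ∑ j, ‖Si θ i j‖ with hKdef
  have hK : Continuous K := by
    apply continuous_finset_sum
    intro i _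
    apply continuous_finset_sum
    intro j _
    exact (hSicont.matrix_elem i j).norm
  obtain ⟨M, hM⟩ := (isCompact_range hK).bddAbove
  set M' : ℝ := max M 1 with hM'def
  have hM'pos : 0 < M' := lt_of_lt_of_le one_pos (le_max_right _ _)
  have hKle : ∀ θ, K θ ≤ M' := fun θ => le_trans (hM ⟨θ, rfl⟩) (le_max_left _ _)
  have hg : Continuous fun θ => (S θ).mulVec (f θ) := hScont.matrix_mulVec hf
  obtain ⟨p, hp⟩ := h _ hg (ε / M') (div_pos hε hM'pos)
  refine ⟨p, fun θ => ?_⟩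
  have key : (aeval (B θ) p).mulVec (c θ) - f θ =
      (Si θ).mulVec ((aeval (A θ) p).mulVec (b θ) - (S θ).mulVec (f θ)) := by
    have e : Si θ * aeval (A θ) p * S θ * Si θ = Si θ * aeval (A θ) p := by
      rw [Matrix.mul_assoc (Si θ * aeval (A θ) p), h2, Matrix.mul_one]
    rw [hconj, hvec, myaeval_conj _ _ _ (h1 θ) (h2 θ), Matrix.mulVec_sub]
    simp only [Matrix.mulVec_mulVec]
    rw [e, h1, Matrix.one_mulVec]
  rw [key]
  calc ‖(Si θ).mulVec ((aeval (A θ) p).mulVec (b θ) - (S θ).mulVec (f θ))‖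
      ≤ K θ * ‖(aeval (A θ) p).mulVec (b θ) - (S θ).mulVec (f θ)‖ := mymulVec_norm_le _ _
    _ ≤ M' * ‖(aeval (A θ) p).mulVec (b θ) - (S θ).mulVec (f θ)‖ :=
        mul_le_mul_of_nonneg_right (hKle θ) (norm_nonneg _)
    _ < M' * (ε / M') := by
        exact mul_lt_mul_of_pos_left (hp θ) hM'pos
    _ = ε := mul_div_cancel₀ ε (ne_of_gt hM'pos)

lemma myCH {n : ℕ} (A : Matrix (Fin n) (Fin n) ℂ) :
    A ^ n = ∑ i : Fin n, (-(A.charpoly.coeff i)) • A ^ (i : ℕ) := by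
  have h0 := Matrix.aeval_self_charpoly A
  rw [Polynomial.aeval_eq_sum_range] at h0
  have hdeg : A.charpoly.natDegree = n := by
    rw [Matrix.charpoly_natDegree_eq_dim, Fintype.card_fin]
  rw [hdeg, Finset.sum_range_succ] at h0
  have hlead : A.charpoly.coeff n = 1 := by
    have := (Matrix.charpoly_monic A).coeff_natDegree
    rwa [hdeg] at this
  rw [hlead, one_smul] at h0
  have : A ^ n = -∑ i ∈ Finset.range n, A.charpoly.coeff i • A ^ i := by
    linear_combination (norm := (abel_nf; skip)) h0
  rw [this, ← Finset.sum_neg_distrib, Finset.sum_range fun i => -(A.charpoly.coeff i • A ^ i)]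
  congr 1
  ext i
  rw [neg_smul]

lemma myAT {n : ℕ} [NeZero n] (A : Matrix (Fin n) (Fin n) ℂ) (b : Fin n → ℂ)
    (T Ac : Matrix (Fin n) (Fin n) ℂ)
    (hT : T = Matrix.of fun i k : Fin n => ((A ^ (k : ℕ)).mulVec b) i)
    (a : Fin n → ℂ) (ha : ∀ i, a i = -(A.charpoly.coeff i))
    (hAc : Ac = Matrix.of fun i j : Fin n =>
      if (i : ℕ) = (j : ℕ) + 1 then 1 else if (j : ℕ) = n - 1 then a i else 0) :
    A * T = T * Ac := by
  subst hT hAc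
  ext i j
  have hLHS : (A * Matrix.of fun i k : Fin n => ((A ^ (k : ℕ)).mulVec b) i) i j
      = ((A ^ ((j : ℕ) + 1)).mulVec b) i := by
    rw [Matrix.mul_apply]
    calc ∑ k, A i k * (Matrix.of fun i k : Fin n => ((A ^ (k : ℕ)).mulVec b) i) k j
        = (A.mulVec ((A ^ (j : ℕ)).mulVec b)) i := rfl
      _ = ((A * A ^ (j : ℕ)).mulVec b) i := by rw [Matrix.mulVec_mulVec]
      _ = ((A ^ ((j : ℕ) + 1)).mulVec b) i := by rw [← pow_succ']
  rw [hLHS, Matrix.mul_apply]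
  by_cases hj : (j : ℕ) = n - 1
  · -- last column
    have hjn : (j : ℕ) + 1 = n := by
      have := Nat.succ_pred_eq_of_pos (Nat.pos_of_ne_zero (NeZero.ne n))
      omega
    have hAc' : ∀ k : Fin n, (Matrix.of fun i j : Fin n =>
        if (i : ℕ) = (j : ℕ) + 1 then 1 else if (j : ℕ) = n - 1 then a i else (0:ℂ)) k j = a k := by
      intro k
      have hk : ¬((k : ℕ) = (j : ℕ) + 1) := by have := k.isLt; omega
      rw [Matrix.of_apply, if_neg hk, if_pos hj]
    simp only [hAc']
    rw [hjn, myCH A]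
    have hsum : ((∑ k : Fin n, -A.charpoly.coeff (k:ℕ) • A ^ (k:ℕ)) *ᵥ b)
        = ∑ k : Fin n, ((-A.charpoly.coeff (k:ℕ) • A ^ (k:ℕ)) *ᵥ b) :=
      map_sum (Matrix.mulVec.addMonoidHomLeft b) _ Finset.univ
    rw [hsum, Finset.sum_apply]
    refine Finset.sum_congr rfl fun k _ => ?_
    rw [Matrix.smul_mulVec, Pi.smul_apply, smul_eq_mul, ha k, Matrix.of_apply]
    ring
  · -- shift column
    have hjlt : (j : ℕ) + 1 < n := by have := j.isLt; omega
    set j' : Fin n := ⟨(j : ℕ) + 1, hjlt⟩ with hj'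
    have hAc' : ∀ k : Fin n, (Matrix.of fun i j : Fin n =>
        if (i : ℕ) = (j : ℕ) + 1 then 1 else if (j : ℕ) = n - 1 then a i else (0:ℂ)) k j
        = if k = j' then 1 else 0 := by
      intro k
      by_cases hk : k = j'
      · simp [Matrix.of_apply, hk, hj']
      · have hk' : ¬((k : ℕ) = (j : ℕ) + 1) := by
          intro h; exact hk (Fin.ext h)
        simp [Matrix.of_apply, hk', hj, hk]
    simp only [hAc', mul_ite, mul_one, mul_zero]
    rw [Finset.sum_ite_eq' Finset.univ j' _]
    simp [j']

/-- controllability canonical form.  If the Kalman matrix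
`T(θ) = (b(θ), A(θ)b(θ), …, A(θ)^{n−1}b(θ))` has full rank `n` for each `θ`, then it is
invertible, conjugates `A(θ)` to the companion-type matrix `A_c(θ)` built from the
coefficients `a_i(θ) = −coeff_i(χ_{A(θ)})` of the characteristic polynomial
`χ_{A(θ)}(z) = z^n − a_{n−1}(θ)z^{n−1} − ⋯ − a_0(θ)`, maps `b(θ)` to `e_1`, and `(A, b)`
is uniformly ensemble reachable iff `(A_c, e_1)` is. -/
theorem stmt_9 {n : ℕ} [NeZero n] (P : Set ℂ) (hP : IsCompact P)
    (A : P → Matrix (Fin n) (Fin n) ℂ) (b : P → Fin n → ℂ)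
    (hA : Continuous A) (hb : Continuous b)
    (T : P → Matrix (Fin n) (Fin n) ℂ)
    (hT : ∀ θ : P, T θ = Matrix.of fun i k : Fin n => ((A θ ^ (k : ℕ)).mulVec (b θ)) i)
    (hrank : ∀ θ : P, (T θ).rank = n)
    (a : P → Fin n → ℂ)
    (ha : ∀ (θ : P) (i : Fin n), a θ i = -((A θ).charpoly.coeff i))
    (Ac : P → Matrix (Fin n) (Fin n) ℂ)
    (hAc : ∀ θ : P, Ac θ = Matrix.of fun i j : Fin n =>
      if (i : ℕ) = (j : ℕ) + 1 then 1 else if (j : ℕ) = n - 1 then a θ i else 0) :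
    (∀ θ : P, IsUnit (T θ)) ∧
    (∀ θ : P, (T θ)⁻¹ * A θ * T θ = Ac θ) ∧
    (∀ θ : P, (T θ)⁻¹.mulVec (b θ) = Pi.single (0 : Fin n) 1) ∧
    (UniformEnsembleReachable1 P A b ↔
      UniformEnsembleReachable1 P Ac fun _ => Pi.single (0 : Fin n) 1) := by
  have hUnit : ∀ θ : P, IsUnit (T θ) := fun θ => my_isUnit_of_rank _ (hrank θ)
  have hdet : ∀ θ : P, IsUnit (T θ).det := fun θ =>
    (Matrix.isUnit_iff_isUnit_det _).mp (hUnit θ)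
  have h1 : ∀ θ : P, (T θ)⁻¹ * T θ = 1 := fun θ => Matrix.nonsing_inv_mul _ (hdet θ)
  have h2 : ∀ θ : P, T θ * (T θ)⁻¹ = 1 := fun θ => Matrix.mul_nonsing_inv _ (hdet θ)
  have hAT : ∀ θ : P, A θ * T θ = T θ * Ac θ := fun θ =>
    myAT (A θ) (b θ) (T θ) (Ac θ) (hT θ) (a θ) (ha θ) (hAc θ)
  have hconj : ∀ θ : P, (T θ)⁻¹ * A θ * T θ = Ac θ := by
    intro θ
    rw [Matrix.mul_assoc, hAT θ, ← Matrix.mul_assoc, h1 θ, Matrix.one_mul]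
  have hTe : ∀ θ : P, (T θ).mulVec (Pi.single (0 : Fin n) 1) = b θ := by
    intro θ
    rw [Matrix.mulVec_single, hT]
    funext i
    simp [Matrix.of_apply]
  have hvec : ∀ θ : P, (T θ)⁻¹.mulVec (b θ) = Pi.single (0 : Fin n) 1 := by
    intro θ
    rw [← hTe θ, Matrix.mulVec_mulVec, h1 θ, Matrix.one_mulVec]
  have hTcont : Continuous T := by
    have : T = fun θ => Matrix.of fun i k : Fin n => ((A θ ^ (k : ℕ)).mulVec (b θ)) i := funext hT
    rw [this]
    apply continuous_matrix
    intro i k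
    exact (continuous_apply i).comp ((hA.pow (k : ℕ)).matrix_mulVec hb)
  have hTicont : Continuous fun θ => (T θ)⁻¹ := by
    have : (fun θ => (T θ)⁻¹) = fun θ => ((T θ).det)⁻¹ • (T θ).adjugate := by
      funext θ
      rw [Matrix.inv_def, Ring.inverse_eq_inv]
    rw [this]
    have hdet' : ∀ θ, (T θ).det ≠ 0 := fun θ => IsUnit.ne_zero (hdet θ)
    exact (hTcont.matrix_det.inv₀ hdet').smul hTcont.matrix_adjugate
  refine ⟨hUnit, hconj, hvec, ?_, ?_⟩
  · -- forward
    intro h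
    exact mytransfer P hP A Ac b (fun _ => Pi.single (0 : Fin n) 1) T (fun θ => (T θ)⁻¹)
      h1 h2 hTcont hTicont (fun θ => (hconj θ).symm) (fun θ => (hvec θ).symm) h
  · -- backward
    intro h
    refine mytransfer P hP Ac A (fun _ => Pi.single (0 : Fin n) 1) b
      (fun θ => (T θ)⁻¹) T h2 h1 hTicont hTcont ?_ ?_ h
    · intro θ
      show A θ = T θ * Ac θ * (T θ)⁻¹
      calc A θ = A θ * T θ * (T θ)⁻¹ := by rw [Matrix.mul_assoc, h2 θ, Matrix.mul_one]
        _ = T θ * Ac θ * (T θ)⁻¹ := by rw [hAT θ]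
    · intro θ
      show b θ = (T θ).mulVec (Pi.single (0 : Fin n) 1)
      rw [hTe θ]
end

section
/- Let P ⊆ ℂ be compact and suppose the pair (A, B) with continuous A : P → ℂ^{n×n} and B : P → ℂ^{n36m} is uniformly ensemble reachable on C(P, ℂ^n). Then: (a) for every θ ∈ P the Kalman matrix (B(θ), A(θ)B(θ), …, A(θ)^{n−1}B(θ)) has rank n; (b) for every s ≥ m + 1 and all pairwise distinct parameters θ_1, …, θ_s ∈ P one has σ(A(θ_1)) ∩ σ(A(θ_2)) ∩ ⋯ ∩ σ(A(θ_s)) = ∅. -/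
open Polynomial Matrix

lemma sum_mulVec' {α n R : Type*} [Fintype n] [NonUnitalNonAssocSemiring R] (s : Finset α)
    (M : α → Matrix n n R) (b : n → R) :
    (∑ a ∈ s, M a) *ᵥ b = ∑ a ∈ s, (M a) *ᵥ b := by
  ext i
  simp [Matrix.mulVec, dotProduct, Finset.sum_apply, Matrix.sum_apply, Finset.sum_mul]
  rw [Finset.sum_comm]

lemma dotProduct_sum' {α n R : Type*} [Fintype n] [NonUnitalNonAssocSemiring R] (s : Finset α)
    (v : n → R) (w : α → n → R) :
    v ⬝ᵥ (∑ a ∈ s, w a) = ∑ a ∈ s, v ⬝ᵥ w a := by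
  simp [dotProduct, Finset.sum_apply, Finset.mul_sum]
  rw [Finset.sum_comm]

lemma mem_span_pows {n : ℕ} (M : Matrix (Fin n) (Fin n) ℂ) (b : Fin n → ℂ) (p : ℂ[X]) :
    (aeval M p).mulVec b ∈
      Submodule.span ℂ (Set.range fun k : Fin n => (M ^ (k : ℕ)) *ᵥ b) := by
  rcases Nat.eq_zero_or_pos n with h0 | hn
  · subst h0
    have : (aeval M p).mulVec b = 0 := Subsingleton.elim _ _
    rw [this]; exact Submodule.zero_mem _
  · have hm := Matrix.charpoly_monic M
    have hnd : M.charpoly.natDegree = n := by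
      simpa using Matrix.charpoly_natDegree_eq_dim M
    have hq1 : M.charpoly ≠ 1 := by
      intro h; rw [h] at hnd; simp at hnd; omega
    have hdeg : (p %ₘ M.charpoly).natDegree < n := by
      simpa [hnd] using Polynomial.natDegree_modByMonic_lt p hm hq1
    have heq : aeval M p = aeval M (p %ₘ M.charpoly) := by
      conv_lhs => rw [← Polynomial.modByMonic_add_div p M.charpoly]
      simp [map_add, _root_.map_mul, Matrix.aeval_self_charpoly]
    rw [heq, Polynomial.aeval_eq_sum_range' hdeg, sum_mulVec']
    refine Submodule.sum_mem _ fun i hi => ?_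
    rw [Matrix.smul_mulVec]
    refine Submodule.smul_mem _ _ (Submodule.subset_span ?_)
    exact ⟨⟨i, Finset.mem_range.1 hi⟩, rfl⟩

lemma dot_aeval_mulVec {n : ℕ} {M : Matrix (Fin n) (Fin n) ℂ} {v : Fin n → ℂ} {lam : ℂ}
    (hv : Mᵀ *ᵥ v = lam • v) (p : ℂ[X]) (x : Fin n → ℂ) :
    v ⬝ᵥ ((aeval M p) *ᵥ x) = p.eval lam * (v ⬝ᵥ x) := by
  have hpow : ∀ (k : ℕ) (y : Fin n → ℂ), v ⬝ᵥ ((M ^ k) *ᵥ y) = lam ^ k * (v ⬝ᵥ y) := by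
    intro k
    induction k with
    | zero => intro y; simp [Matrix.one_mulVec]
    | succ k ih =>
      intro y
      rw [pow_succ', ← Matrix.mulVec_mulVec, Matrix.dotProduct_mulVec,
        ← Matrix.mulVec_transpose, hv, smul_dotProduct, smul_eq_mul, ih y]
      ring
  rw [Polynomial.aeval_eq_sum_range (x := M), sum_mulVec', dotProduct_sum',
    Polynomial.eval_eq_sum_range]
  rw [Finset.sum_mul]
  refine Finset.sum_congr rfl fun i _ => ?_
  rw [Matrix.smul_mulVec, dotProduct_smul, hpow i x]
  simp [smul_eq_mul]; ring

lemma left_eig {n : ℕ} (M : Matrix (Fin n) (Fin n) ℂ) {lam : ℂ} (h : lam ∈ spectrum ℂ M) :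
    ∃ v : Fin n → ℂ, v ≠ 0 ∧ Mᵀ *ᵥ v = lam • v := by
  rw [spectrum.mem_iff] at h
  have hdet : (algebraMap ℂ (Matrix (Fin n) (Fin n) ℂ) lam - M).det = 0 := by
    by_contra hd
    exact h ((Matrix.isUnit_iff_isUnit_det _).2 (Ne.isUnit hd))
  have hdetT : (algebraMap ℂ (Matrix (Fin n) (Fin n) ℂ) lam - Mᵀ).det = 0 := by
    have : (algebraMap ℂ (Matrix (Fin n) (Fin n) ℂ) lam - Mᵀ)
        = (algebraMap ℂ (Matrix (Fin n) (Fin n) ℂ) lam - M)ᵀ := by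
      rw [Matrix.transpose_sub, Algebra.algebraMap_eq_smul_one,
        Matrix.transpose_smul, Matrix.transpose_one]
    rw [this, Matrix.det_transpose]; exact hdet
  obtain ⟨v, hv0, hv⟩ := (Matrix.exists_mulVec_eq_zero_iff).2 hdetT
  refine ⟨v, hv0, ?_⟩
  rw [Matrix.sub_mulVec, Algebra.algebraMap_eq_smul_one, Matrix.smul_mulVec,
    Matrix.one_mulVec] at hv
  have := sub_eq_zero.mp hv
  exact this.symm

theorem stmt12_partA {n m : ℕ} (P : Set ℂ)
    (A : P → Matrix (Fin n) (Fin n) ℂ) (B : P → Matrix (Fin n) (Fin m) ℂ)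
    (hUER : UniformEnsembleReachable P A B) :
    ∀ θ : P,
      (Matrix.of fun (i : Fin n) (kj : Fin n × Fin m) =>
        ((A θ ^ (kj.1 : ℕ)).mulVec fun i' => B θ i' kj.2) i).rank = n := by
  intro θ
  set K := Matrix.of fun (i : Fin n) (kj : Fin n × Fin m) =>
      ((A θ ^ (kj.1 : ℕ)).mulVec fun i' => B θ i' kj.2) i with hK
  set S := Submodule.span ℂ (Set.range Kᵀ) with hS
  have hSt : S = ⊤ := by
    rw [eq_top_iff]
    intro x _
    have hcl : x ∈ closure (S : Set (Fin n → ℂ)) := by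
      rw [Metric.mem_closure_iff]
      intro ε hε
      obtain ⟨p, hp⟩ := hUER (fun _ => x) continuous_const ε hε
      refine ⟨∑ j : Fin m, (Polynomial.aeval (A θ) (p j)).mulVec fun i => B θ i j, ?_, ?_⟩
      · refine Submodule.sum_mem _ fun j _ => ?_
        refine Submodule.span_mono ?_ (mem_span_pows (A θ) (fun i => B θ i j) (p j))
        rintro - ⟨k, rfl⟩
        exact ⟨(k, j), rfl⟩
      · rw [dist_comm, dist_eq_norm]
        exact hp θ
    rwa [(Submodule.closed_of_finiteDimensional S).closure_eq] at hcl
  rw [Matrix.rank_eq_finrank_span_cols, show K.col = Kᵀ from rfl, ← hS, hSt, finrank_top,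
    Module.finrank_fintype_fun_eq_card, Fintype.card_fin]

theorem stmt12_partB {n m : ℕ} (P : Set ℂ)
    (A : P → Matrix (Fin n) (Fin n) ℂ) (B : P → Matrix (Fin n) (Fin m) ℂ)
    (hUER : UniformEnsembleReachable P A B) :
    ∀ s : ℕ, m + 1 ≤ s → ∀ θ : Fin s → P, Function.Injective θ →
      (⋂ i : Fin s, spectrum ℂ (A (θ i))) = ∅ := by
  intro s hs θ hθ
  by_contra hne
  obtain ⟨lam, hlam⟩ := Set.nonempty_iff_ne_empty.2 hne
  rw [Set.mem_iInter] at hlam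
  -- left eigenvectors
  have hev : ∀ i : Fin s, ∃ v : Fin n → ℂ, v ≠ 0 ∧ (A (θ i))ᵀ *ᵥ v = lam • v :=
    fun i => left_eig _ (hlam i)
  choose v hv0 hveig using hev
  -- the s × m matrix
  set M : Matrix (Fin s) (Fin m) ℂ :=
    Matrix.of (fun i j => v i ⬝ᵥ fun i' => B (θ i) i' j) with hM
  set W := LinearMap.range M.mulVecLin with hW
  have hWne : W ≠ ⊤ := by
    intro htop
    have h1 : Module.finrank ℂ W = M.rank := rfl
    have h2 : M.rank ≤ m := Matrix.rank_le_width M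
    rw [htop, finrank_top, Module.finrank_fintype_fun_eq_card, Fintype.card_fin] at h1
    omega
  obtain ⟨c, hc⟩ : ∃ c, c ∉ W := by
    by_contra h
    push_neg at h
    exact hWne (eq_top_iff.2 fun x _ => h x)
  obtain ⟨φ, hφc, hφW⟩ := Submodule.exists_dual_map_eq_bot_of_notMem hc inferInstance
  have hφ0 : ∀ y ∈ W, φ y = 0 := by
    intro y hy
    have : φ y ∈ W.map φ := Submodule.mem_map_of_mem hy
    rw [hφW] at this
    simpa using this
  obtain ⟨K, hK0, hKb⟩ : ∃ K : ℝ, 0 ≤ K ∧ ∀ x, ‖φ x‖ ≤ K * ‖x‖ := by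
    refine ⟨‖LinearMap.toContinuousLinearMap φ‖, norm_nonneg _, fun x => ?_⟩
    have h := (LinearMap.toContinuousLinearMap φ).le_opNorm x
    rwa [show (LinearMap.toContinuousLinearMap φ) x = φ x from
      congrFun (LinearMap.coe_toContinuousLinearMap' φ) x] at h
  set C : ℝ := ∑ i : Fin s, ∑ k : Fin n, ‖v i k‖ with hC
  have hC0 : 0 ≤ C := Finset.sum_nonneg fun _ _ => Finset.sum_nonneg fun _ _ => norm_nonneg _
  set δ : ℝ := ‖φ c‖ with hδ
  have hδ0 : 0 < δ := norm_pos_iff.2 hφc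
  set D : ℝ := (K + 1) * (C + 1) with hD
  have hD0 : 0 < D := by
    rw [hD]; nlinarith
  set ε : ℝ := δ / (2 * D) with hε
  have hε0 : 0 < ε := by
    rw [hε]; exact div_pos hδ0 (by linarith)
  -- target values
  have hk : ∀ i : Fin s, ∃ k : Fin n, v i k ≠ 0 := fun i => Function.ne_iff.1 (hv0 i)
  choose kk hkk using hk
  set u : Fin s → Fin n → ℂ := fun i => Pi.single (kk i) (c i / v i (kk i)) with hu
  have hvu : ∀ i, v i ⬝ᵥ u i = c i := by
    intro i
    rw [hu]
    simp only [dotProduct_single]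
    rw [mul_comm, div_mul_cancel₀ _ (hkk i)]
  -- interpolating function
  have hInj : Set.InjOn (fun i : Fin s => ((θ i : ℂ))) ↑(Finset.univ : Finset (Fin s)) :=
    fun a _ b _ h => hθ (Subtype.coe_injective h)
  set g : P → Fin n → ℂ := fun t k =>
    eval (t : ℂ) (Lagrange.interpolate Finset.univ (fun i => ((θ i : ℂ))) (fun i => u i k))
    with hg
  have hgc : Continuous g :=
    continuous_pi fun k => (Polynomial.continuous _).comp continuous_subtype_val
  have hgθ : ∀ i, g (θ i) = u i := by
    intro i
    funext k
    exact Lagrange.eval_interpolate_at_node _ hInj (Finset.mem_univ i)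
  obtain ⟨p, hp⟩ := hUER g hgc ε hε0
  set q : Fin m → ℂ := fun j => (p j).eval lam with hq
  set y : Fin s → ℂ := M *ᵥ q with hy
  have hyW : y ∈ W := ⟨q, rfl⟩
  -- y i = v i ⬝ᵥ x_i
  have hyi : ∀ i : Fin s, y i =
      v i ⬝ᵥ (∑ j : Fin m, (aeval (A (θ i)) (p j)).mulVec fun i' => B (θ i) i' j) := by
    intro i
    rw [dotProduct_sum']
    have h0 : y i = ∑ j, M i j * q j := rfl
    rw [h0]
    refine Finset.sum_congr rfl fun j _ => ?_
    rw [dot_aeval_mulVec (hveig i) (p j)]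
    show M i j * q j = eval lam (p j) * _
    simp only [hM, hq, Matrix.of_apply]
    ring
  -- bound each coordinate
  have hcoord : ∀ i : Fin s, ‖c i - y i‖ ≤ C * ε := by
    intro i
    set x := ∑ j : Fin m, (aeval (A (θ i)) (p j)).mulVec fun i' => B (θ i) i' j with hx
    have h1 : c i - y i = v i ⬝ᵥ (g (θ i) - x) := by
      have : v i ⬝ᵥ (g (θ i) - x) = v i ⬝ᵥ g (θ i) - v i ⬝ᵥ x := by
        simp [dotProduct_sub]
      rw [this, hgθ i, hvu i, ← hyi i]
    have h2 : ‖g (θ i) - x‖ ≤ ε := by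
      have := hp (θ i)
      rw [← hx] at this
      calc ‖g (θ i) - x‖ = ‖x - g (θ i)‖ := by rw [norm_sub_rev]
        _ ≤ ε := le_of_lt this
    rw [h1]
    calc ‖v i ⬝ᵥ (g (θ i) - x)‖ ≤ ∑ k : Fin n, ‖v i k‖ * ‖(g (θ i) - x) k‖ := by
          refine (norm_sum_le _ _).trans ?_
          refine Finset.sum_le_sum fun k _ => ?_
          rw [norm_mul]
      _ ≤ ∑ k : Fin n, ‖v i k‖ * ε := by
          refine Finset.sum_le_sum fun k _ => ?_
          exact mul_le_mul_of_nonneg_left ((norm_le_pi_norm _ k).trans h2) (norm_nonneg _)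
      _ = (∑ k : Fin n, ‖v i k‖) * ε := by rw [Finset.sum_mul]
      _ ≤ C * ε := by
          refine mul_le_mul_of_nonneg_right ?_ (le_of_lt hε0)
          exact Finset.single_le_sum (f := fun i => ∑ k : Fin n, ‖v i k‖)
            (fun i _ => Finset.sum_nonneg fun _ _ => norm_nonneg _) (Finset.mem_univ i)
  have hnorm : ‖c - y‖ ≤ C * ε :=
    (pi_norm_le_iff_of_nonneg (mul_nonneg hC0 hε0.le)).2 fun i => by
      simpa using hcoord i
  have hfinal : δ ≤ K * (C * ε) := by
    have h1 : φ c = φ (c - y) + φ y := by rw [← map_add]; ring_nf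
    have h2 : φ y = 0 := hφ0 y hyW
    have h3 : δ = ‖φ (c - y)‖ := by
      rw [hδ, h1, h2, add_zero]
    rw [h3]
    exact (hKb _).trans (mul_le_mul_of_nonneg_left hnorm hK0)
  have hlast : K * (C * ε) ≤ D * ε := by
    have hKC : K * C ≤ D := by
      rw [hD]
      nlinarith
    calc K * (C * ε) = (K * C) * ε := by ring
      _ ≤ D * ε := mul_le_mul_of_nonneg_right hKC (le_of_lt hε0)
  have : δ ≤ δ / 2 := by
    have : D * ε = δ / 2 := by
      rw [hε]; field_simp
    linarith [hfinal, hlast]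
  linarith

/-- necessary conditions for uniform ensemble reachability of a multi-input
pair `(A, B)`: (a) pointwise Kalman rank condition; (b) for any `s ≥ m + 1` pairwise
distinct parameters the intersection of the corresponding spectra is empty. -/
theorem stmt_12 {n m : ℕ} (P : Set ℂ) (hP : IsCompact P)
    (A : P → Matrix (Fin n) (Fin n) ℂ) (B : P → Matrix (Fin n) (Fin m) ℂ)
    (hA : Continuous A) (hB : Continuous B)
    (hUER : UniformEnsembleReachable P A B) :
    (∀ θ : P,
      (Matrix.of fun (i : Fin n) (kj : Fin n × Fin m) =>
        ((A θ ^ (kj.1 : ℕ)).mulVec fun i' => B θ i' kj.2) i).rank = n) ∧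
    (∀ s : ℕ, m + 1 ≤ s → ∀ θ : Fin s → P, Function.Injective θ →
      (⋂ i : Fin s, spectrum ℂ (A (θ i))) = ∅) := by
  exact ⟨stmt12_partA P A B hUER, stmt12_partB P A B hUER⟩
end

section
/- Let P ⊆ ℂ be compact, equipped with the restriction of Lebesgue measure, and let R : P → ℂ^{n×m} be Lebesgue measurable. Then there exists a bounded Lebesgue-measurable function α : P → ℂ^m such that for almost every θ ∈ P: R(θ) α(θ) = 0, and moreover ‖α(θ)‖ = 1 whenever ker R(θ) ≠ {0}. -/
open Matrix MeasureTheory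

lemma adj_last_last {t : ℕ} (A : Matrix (Fin (t+1)) (Fin (t+1)) ℂ) :
    adjugate A (Fin.last t) (Fin.last t) = det (A.submatrix Fin.castSucc Fin.castSucc) := by
  have hsub : ((A.updateRow (Fin.last t) (Pi.single (Fin.last t) 1)).submatrix
      (Fin.last t).succAbove (Fin.last t).succAbove) = A.submatrix Fin.castSucc Fin.castSucc := by
    rw [Matrix.submatrix_updateRow_succAbove, Fin.succAbove_last]
  rw [Matrix.adjugate_apply, Matrix.det_succ_row _ (Fin.last t)]
  rw [Finset.sum_eq_single (Fin.last t)]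
  · rw [hsub]; simp [Matrix.updateRow_self]
  · intro j _ hj
    simp [Matrix.updateRow_self, Pi.single_apply, hj.symm]
  · simp

lemma key_exists {m : ℕ} (M : Matrix (Fin m) (Fin m) ℂ) :
    ∀ t (ht : t ≤ m), (M.submatrix (Fin.castLE ht) (Fin.castLE ht)).det = 0 →
    ∃ t', ∃ ht' : t' ≤ m, ∃ k : Fin t',
      (fun i : Fin t' => adjugate (M.submatrix (Fin.castLE ht') (Fin.castLE ht')) i k) ≠ 0 ∧
      (M.submatrix (Fin.castLE ht') (Fin.castLE ht')).mulVec
        (fun i => adjugate (M.submatrix (Fin.castLE ht') (Fin.castLE ht')) i k) = 0 := by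
  intro t
  induction t with
  | zero => intro ht h; simp [Matrix.det_fin_zero] at h
  | succ t ih =>
    intro ht h
    set B := M.submatrix (Fin.castLE ht) (Fin.castLE ht) with hB
    by_cases hadj : adjugate B = 0
    · -- reduce to t
      have ht2 : t ≤ m := le_trans (Nat.le_succ t) ht
      have hBsub : B.submatrix Fin.castSucc Fin.castSucc
          = M.submatrix (Fin.castLE ht2) (Fin.castLE ht2) := by
        rw [hB, Matrix.submatrix_submatrix]
        congr 1
      have : (M.submatrix (Fin.castLE ht2) (Fin.castLE ht2)).det = 0 := by
        rw [← hBsub, ← adj_last_last, hadj]; rfl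
      exact ih ht2 this
    · -- some column of the adjugate works
      have : ∃ i k, adjugate B i k ≠ 0 := by
        by_contra hc
        push_neg at hc
        exact hadj (by ext i k; exact hc i k)
      obtain ⟨i0, k, hik⟩ := this
      refine ⟨t + 1, ht, k, ?_, ?_⟩
      · intro hzero
        exact hik (congrFun hzero i0)
      · funext i
        have : B.mulVec (fun j => adjugate B j k) i = (B * adjugate B) i k := by
          simp [Matrix.mulVec, dotProduct, Matrix.mul_apply]
        rw [this, Matrix.mul_adjugate, h]
        simp

lemma sum_pad {m t : ℕ} (ht : t ≤ m) (f : Fin t → ℂ) :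
    (∑ j : Fin m, if h : (j : ℕ) < t then f ⟨j, h⟩ else 0) = ∑ j : Fin t, f j := by
  rw [Fin.sum_univ_eq_sum_range (fun a => if h : a < t then f ⟨a, h⟩ else 0) m,
    ← Finset.sum_subset (Finset.range_subset_range.mpr ht)
      (fun x _ hx => by simp only [Finset.mem_range, not_lt] at hx; simp [Nat.not_lt.mpr hx]),
    ← Fin.sum_univ_eq_sum_range (fun a => if h : a < t then f ⟨a, h⟩ else 0) t]
  exact Finset.sum_congr rfl fun j _ => by simp [j.isLt]

open scoped ComplexOrder in
lemma gram_zero {n m : ℕ} (R : Matrix (Fin n) (Fin m) ℂ) (v : Fin m → ℂ)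
    (h : dotProduct (star v) ((Rᴴ * R).mulVec v) = 0) : R.mulVec v = 0 := by
  have : dotProduct (star (R.mulVec v)) (R.mulVec v) = 0 := by
    rw [Matrix.star_mulVec, ← Matrix.dotProduct_mulVec, Matrix.mulVec_mulVec]
    exact h
  exact dotProduct_star_self_eq_zero.mp this

/-- candidate kernel vector: zero-padded column `k` of the adjugate of the
top-left `t × t` block of `Rᴴ * R`. -/
noncomputable def cand {n m : ℕ} (R : Matrix (Fin n) (Fin m) ℂ) (t k : ℕ) : Fin m → ℂ :=
  fun i => if h : t ≤ m ∧ (i : ℕ) < t ∧ k < t then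
    adjugate ((Rᴴ * R).submatrix (Fin.castLE h.1) (Fin.castLE h.1)) ⟨i, h.2.1⟩ ⟨k, h.2.2⟩
  else 0

lemma cand_good {n m : ℕ} (R : Matrix (Fin n) (Fin m) ℂ)
    (hker : ∃ v, v ≠ 0 ∧ R.mulVec v = 0) :
    ∃ t k, t ≤ m ∧ k < t ∧ cand R t k ≠ 0 ∧ R.mulVec (cand R t k) = 0 := by
  classical
  obtain ⟨v, hv, hRv⟩ := hker
  set M := Rᴴ * R with hM
  have hMv : M.mulVec v = 0 := by
    rw [hM, ← Matrix.mulVec_mulVec, hRv, Matrix.mulVec_zero]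
  have hdet : M.det = 0 := (Matrix.exists_mulVec_eq_zero_iff).mp ⟨v, hv, hMv⟩
  have hdet' : (M.submatrix (Fin.castLE (le_refl m)) (Fin.castLE (le_refl m))).det = 0 := by
    have : M.submatrix (Fin.castLE (le_refl m)) (Fin.castLE (le_refl m)) = M := by
      ext i j; simp [Matrix.submatrix_apply]
    rw [this]; exact hdet
  obtain ⟨t, ht, k, hcol, hkerB⟩ := key_exists M m (le_refl m) hdet'
  set B := M.submatrix (Fin.castLE ht) (Fin.castLE ht) with hBdef
  refine ⟨t, k, ht, k.isLt, ?_, ?_⟩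
  · -- cand ≠ 0
    intro h0
    apply hcol
    funext i
    have := congrFun h0 ⟨i, lt_of_lt_of_le i.isLt ht⟩
    simp only [cand, Fin.eta] at this ⊢
    rw [dif_pos ⟨ht, i.isLt, k.isLt⟩] at this
    simpa using this
  · -- R *ᵥ cand = 0
    apply _root_.gram_zero
    rw [← hM]
    -- the value of cand
    have hcv : ∀ i : Fin m, cand R t k i
        = if h : (i : ℕ) < t then adjugate B ⟨i, h⟩ ⟨k, k.isLt⟩ else 0 := by
      intro i
      simp only [cand]
      by_cases h : (i : ℕ) < t
      · rw [dif_pos ⟨ht, h, k.isLt⟩, dif_pos h]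
      · rw [dif_neg (by tauto), dif_neg h]
    -- M *ᵥ cand vanishes on indices < t
    have hMc : ∀ i0 : Fin t, (M.mulVec (cand R t k)) (Fin.castLE ht i0) = 0 := by
      intro i0
      have : (M.mulVec (cand R t k)) (Fin.castLE ht i0)
          = ∑ j : Fin m, if h : (j : ℕ) < t
              then M (Fin.castLE ht i0) (Fin.castLE ht ⟨j, h⟩) * adjugate B ⟨j, h⟩ ⟨k, k.isLt⟩
              else 0 := by
        simp only [Matrix.mulVec, dotProduct]
        refine Finset.sum_congr rfl fun j _ => ?_
        rw [hcv j]
        by_cases h : (j : ℕ) < t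
        · rw [dif_pos h, dif_pos h]
          congr 1
        · rw [dif_neg h, dif_neg h, mul_zero]
      rw [this, sum_pad ht
        (fun j => M (Fin.castLE ht i0) (Fin.castLE ht j) * adjugate B j ⟨k, k.isLt⟩)]
      have hk := congrFun hkerB i0
      simpa [Matrix.mulVec, dotProduct, hBdef, Matrix.submatrix_apply] using hk
    -- conclude the quadratic form vanishes
    apply Finset.sum_eq_zero
    intro i _
    by_cases h : (i : ℕ) < t
    · have : i = Fin.castLE ht ⟨i, h⟩ := Fin.ext rfl
      rw [Pi.star_apply, this, hMc ⟨i, h⟩, mul_zero]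
    · rw [Pi.star_apply, hcv i, dif_neg h]
      simp

open scoped Classical in
/-- Pick the first good candidate from a list of `(t, k)` pairs, normalized. -/
noncomputable def sel {n m : ℕ} (R : Matrix (Fin n) (Fin m) ℂ) : List (ℕ × ℕ) → (Fin m → ℂ)
  | [] => 0
  | p :: ps =>
    if cand R p.1 p.2 ≠ 0 ∧ R.mulVec (cand R p.1 p.2) = 0
    then (‖cand R p.1 p.2‖ : ℂ)⁻¹ • cand R p.1 p.2
    else sel R ps

lemma sel_spec {n m : ℕ} (R : Matrix (Fin n) (Fin m) ℂ) (ps : List (ℕ × ℕ)) :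
    (sel R ps = 0 ∨ (‖sel R ps‖ = 1 ∧ R.mulVec (sel R ps) = 0)) ∧
    ((∃ p ∈ ps, cand R p.1 p.2 ≠ 0 ∧ R.mulVec (cand R p.1 p.2) = 0) → ‖sel R ps‖ = 1) := by
  classical
  induction ps with
  | nil => refine ⟨Or.inl rfl, ?_⟩; rintro ⟨p, hp, _⟩; simp at hp
  | cons p ps ih =>
    by_cases hgood : cand R p.1 p.2 ≠ 0 ∧ R.mulVec (cand R p.1 p.2) = 0
    · have hsel : sel R (p :: ps) = (‖cand R p.1 p.2‖ : ℂ)⁻¹ • cand R p.1 p.2 := by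
        rw [sel, if_pos hgood]
      have hnorm : ‖sel R (p :: ps)‖ = 1 := by
        rw [hsel, norm_smul]
        have h0 : ‖cand R p.1 p.2‖ ≠ 0 := norm_ne_zero_iff.mpr hgood.1
        rw [norm_inv, Complex.norm_real, Real.norm_of_nonneg (norm_nonneg _)]
        field_simp
      refine ⟨Or.inr ⟨hnorm, ?_⟩, fun _ => hnorm⟩
      rw [hsel, Matrix.mulVec_smul, hgood.2, smul_zero]
    · have hsel : sel R (p :: ps) = sel R ps := by rw [sel, if_neg hgood]
      refine ⟨hsel ▸ ih.1, ?_⟩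
      rintro ⟨q, hq, hqg⟩
      rcases List.mem_cons.mp hq with rfl | hq'
      · exact absurd hqg hgood
      · exact hsel ▸ ih.2 ⟨q, hq', hqg⟩

lemma meas_eq_zero {α : Type*} [MeasurableSpace α] {m : ℕ} (f : α → Fin m → ℂ)
    (hf : Measurable f) : MeasurableSet {θ | f θ = 0} := by
  have : {θ | f θ = 0} = ⋂ j, (fun θ => f θ j) ⁻¹' {0} := by
    ext θ; simp [funext_iff, Set.mem_iInter]
  rw [this]
  exact MeasurableSet.iInter fun j =>
    ((measurable_pi_apply j).comp hf) (measurableSet_singleton 0)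

lemma cand_cont {n m : ℕ} (t k : ℕ) :
    Continuous fun A : Matrix (Fin n) (Fin m) ℂ => cand A t k := by
  apply continuous_pi
  intro i
  unfold cand
  by_cases h : t ≤ m ∧ (i : ℕ) < t ∧ k < t
  · simp only [dif_pos h]
    exact (((continuous_id.matrix_conjTranspose.matrix_mul
      continuous_id).matrix_submatrix _ _).matrix_adjugate.matrix_elem _ _)
  · simp only [dif_neg h]
    exact continuous_const

noncomputable instance matrixMeasurableSpace {n m : ℕ} : MeasurableSpace (Matrix (Fin n) (Fin m) ℂ) :=
  inferInstanceAs (MeasurableSpace (Fin n → Fin m → ℂ))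

instance matrixBorelSpace {n m : ℕ} : BorelSpace (Matrix (Fin n) (Fin m) ℂ) :=
  ⟨BorelSpace.measurable_eq (α := Fin n → Fin m → ℂ)⟩

lemma sel_meas {n m : ℕ} {α : Type*} [MeasurableSpace α]
    (R : α → Matrix (Fin n) (Fin m) ℂ) (hR : Measurable R) (ps : List (ℕ × ℕ)) :
    Measurable fun θ => sel (R θ) ps := by
  classical
  induction ps with
  | nil => simpa [sel] using measurable_const
  | cons p ps ih =>
    have hc : Measurable fun θ => cand (R θ) p.1 p.2 := (cand_cont p.1 p.2).measurable.comp hR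
    have hmv : Measurable fun θ => (R θ).mulVec (cand (R θ) p.1 p.2) := by
      apply measurable_pi_lambda
      intro i
      have : (fun θ => (R θ).mulVec (cand (R θ) p.1 p.2) i)
          = fun θ => ∑ j, R θ i j * cand (R θ) p.1 p.2 j := rfl
      rw [this]
      exact Finset.measurable_sum _ fun j _ =>
        (((measurable_pi_apply j).comp ((measurable_pi_apply i).comp hR))).mul
          ((measurable_pi_apply j).comp hc)
    have hset : MeasurableSet
        {θ | cand (R θ) p.1 p.2 ≠ 0 ∧ (R θ).mulVec (cand (R θ) p.1 p.2) = 0} :=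
      ((meas_eq_zero _ hc).compl).inter (meas_eq_zero _ hmv)
    have hb : Measurable fun θ => (‖cand (R θ) p.1 p.2‖ : ℂ)⁻¹ • cand (R θ) p.1 p.2 := by
      apply measurable_pi_lambda
      intro j
      exact ((Complex.measurable_ofReal.comp hc.norm).inv).mul ((measurable_pi_apply j).comp hc)
    simp only [sel]
    exact Measurable.ite hset hb ih

/-- The restriction of Lebesgue measure on `ℂ` to a subset `P`, as a measure on the
subtype `↥P`. -/
noncomputable def lebesgueOn (P : Set ℂ) : Measure P :=
  Measure.comap Subtype.val volume

/-- measurable selection lemma.  For a Lebesgue measurable matrix-valued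
function `R` on a compact set `P ⊆ ℂ` there is a bounded measurable function
`α : P → ℂ^m` such that almost everywhere `R(θ) α(θ) = 0` and `‖α(θ)‖ = 1` whenever the
kernel of `R(θ)` is nontrivial. -/
theorem stmt_15 {n m : ℕ} (P : Set ℂ) (hP : IsCompact P)
    (R : P → Matrix (Fin n) (Fin m) ℂ)
    (hR : ∀ (i : Fin n) (j : Fin m), Measurable fun θ : P => R θ i j) :
    ∃ α : P → Fin m → ℂ, Measurable α ∧ (∃ C : ℝ, ∀ θ : P, ‖α θ‖ ≤ C) ∧
      ∀ᵐ θ ∂(lebesgueOn P),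
        (R θ).mulVec (α θ) = 0 ∧
        (LinearMap.ker (Matrix.toLin' (R θ)) ≠ ⊥ → ‖α θ‖ = 1) := by

  classical
  set L : List (ℕ × ℕ) :=
    (List.range (m+1)).flatMap (fun t => (List.range (m+1)).map fun k => (t, k)) with hL
  have hRmeas : Measurable fun θ : P => R θ :=
    measurable_pi_lambda _ fun i => measurable_pi_lambda _ fun j => hR i j
  refine ⟨fun θ => sel (R θ) L, sel_meas R hRmeas L, ⟨1, ?_⟩, ?_⟩
  · intro θ
    show ‖sel (R θ) L‖ ≤ 1
    rcases (sel_spec (R θ) L).1 with h | h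
    · rw [h]; simp
    · rw [h.1]
  · apply ae_of_all
    intro θ
    constructor
    · show (R θ).mulVec (sel (R θ) L) = 0
      rcases (sel_spec (R θ) L).1 with h | h
      · rw [h, Matrix.mulVec_zero]
      · exact h.2
    · intro hker
      have hex : ∃ v, v ≠ 0 ∧ (R θ).mulVec v = 0 := by
        obtain ⟨v, hv1, hv2⟩ := (Submodule.ne_bot_iff _).mp hker
        exact ⟨v, hv2, by simpa [Matrix.toLin'_apply] using hv1⟩
      obtain ⟨t, k, ht, hk, h1, h2⟩ := cand_good (R θ) hex
      refine (sel_spec (R θ) L).2 ⟨(t, k), ?_, h1, h2⟩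
      simp only [hL, List.mem_flatMap, List.mem_map, List.mem_range]
      exact ⟨t, Nat.lt_succ_of_le ht, k, by omega, rfl⟩
end

section
/- Let P ⊆ ℂ be compact, equipped with the restriction of Lebesgue measure, let 1 ≤ q < ∞, let a : P → ℂ be continuous and b ∈ L^q(P, ℂ). (a) If the scalar pair (a, b) is L^q-ensemble reachable, i.e. span{θ ↦ a(θ)^k b(θ) : k ∈ ℕ} is dense in L^q(P, ℂ), then b(θ) ≠ 0 for almost all θ ∈ P and a is essentially univalent, i.e. there is a measurable set S ⊆ P of full measure such that the restriction of a to S is injective. (b) Conversely, if a is essentially univalent, b(θ) ≠ 0 for almost all θ ∈ P, and inf over polynomials p ∈ ℂ[z] of ∫_P |p(a(θ)) b(θ) − conj(a(θ)) b(θ)|^q dθ equals 0, then (a, b) is L^q-ensemble reachable. -/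
open Polynomial MeasureTheory Filter Topology ENNReal

/-- `L^q`-ensemble reachability of a scalar pair `(a, b)`: the span of the functions
`θ ↦ a(θ)^k b(θ)`, i.e. of `θ ↦ p(a(θ)) b(θ)` for polynomials `p`, is dense in
`L^q(P, ℂ)`. -/
def LqEnsembleReachableScalar (P : Set ℂ) (q : ℝ) (a b : P → ℂ) : Prop :=
  ∀ f : P → ℂ, MemLp f (ENNReal.ofReal q) (lebesgueOn P) →
    ∀ ε : ℝ, 0 < ε → ∃ p : Polynomial ℂ,
      eLpNorm (fun θ => p.eval (a θ) * b θ - f θ) (ENNReal.ofReal q) (lebesgueOn P)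
        < ENNReal.ofReal ε

namespace Stmt17

lemma ofReal_norm_eq_coe_nnnorm {E : Type*} [NormedAddCommGroup E] (x : E) :
    ENNReal.ofReal ‖x‖ = (‖x‖₊ : ℝ≥0∞) := ENNReal.ofReal_eq_coe_nnreal _

lemma eLpNorm_eq_lintegral_rpow_nnnorm {α E : Type*} [MeasurableSpace α] {μ : Measure α}
    [NormedAddCommGroup E] {p : ℝ≥0∞} (hp_ne_zero : p ≠ 0) (hp_ne_top : p ≠ ∞) {f : α → E} :
    eLpNorm f p μ = (∫⁻ x, (‖f x‖₊ : ℝ≥0∞) ^ p.toReal ∂μ) ^ (1 / p.toReal) :=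
  eLpNorm_eq_lintegral_rpow_enorm_toReal hp_ne_zero hp_ne_top

lemma lebesgueOn_finite {P : Set ℂ} (hP : IsCompact P) : IsFiniteMeasure (lebesgueOn P) := by
  constructor
  rw [lebesgueOn, Measure.comap_apply _ Subtype.val_injective
    (fun s hs => (MeasurableEmbedding.subtype_coe hP.measurableSet).measurableSet_image.2 hs) _
    MeasurableSet.univ]
  simpa using hP.measure_lt_top

variable {P : Set ℂ} {q : ℝ} {a b : P → ℂ}

lemma bne_ae (hP : IsCompact P) (hq : 1 ≤ q)
    (hb : MemLp b (ENNReal.ofReal q) (lebesgueOn P))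
    (hr : LqEnsembleReachableScalar P q a b) :
    ∀ᵐ θ ∂(lebesgueOn P), b θ ≠ 0 := by
  set μ := lebesgueOn P with hμdef
  haveI : IsFiniteMeasure μ := lebesgueOn_finite hP
  have hq0 : 0 < q := lt_of_lt_of_le one_pos hq
  have hq'0 : (ENNReal.ofReal q) ≠ 0 := by simp [ENNReal.ofReal_eq_zero]; linarith
  have hq'top : ENNReal.ofReal q ≠ ∞ := ENNReal.ofReal_ne_top
  have htq : (ENNReal.ofReal q).toReal = q := ENNReal.toReal_ofReal hq0.le
  obtain ⟨b', hb'm, hbb'⟩ := hb.aestronglyMeasurable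
  set Z : Set P := {θ | b' θ = 0} with hZdef
  have hZm : MeasurableSet Z := hb'm.measurable (measurableSet_singleton (0:ℂ))
  have hf : MemLp (Z.indicator fun _ => (1:ℂ)) (ENNReal.ofReal q) μ :=
    (memLp_const (1:ℂ)).indicator hZm
  have key : ∀ ε : ℝ, 0 < ε → μ Z ^ (1/q) < ENNReal.ofReal ε := by
    intro ε hε
    obtain ⟨p, hp⟩ := hr _ hf ε hε
    have hle : eLpNorm (Z.indicator fun _ => (-1:ℂ)) (ENNReal.ofReal q) μ ≤
        eLpNorm (fun θ => p.eval (a θ) * b θ - (Z.indicator fun _ => (1:ℂ)) θ)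
          (ENNReal.ofReal q) μ := by
      apply eLpNorm_mono_ae
      filter_upwards [hbb'] with θ hθ
      by_cases hZθ : θ ∈ Z
      · have hbz : b θ = 0 := by rw [hθ]; exact hZθ
        simp [Set.indicator_of_mem hZθ, hbz]
      · simp only [Set.indicator_of_notMem hZθ, norm_zero, sub_zero, norm_mul]
        positivity
    rw [eLpNorm_indicator_const hZm hq'0 hq'top, htq] at hle
    simpa using lt_of_le_of_lt hle hp
  have hZ0 : μ Z = 0 := by
    by_contra hne
    have hfin : μ Z ≠ ∞ := (measure_lt_top μ Z).ne
    have hx0 : μ Z ^ (1/q) ≠ 0 := by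
      simp only [ne_eq, ENNReal.rpow_eq_zero_iff, not_or]
      exact ⟨fun h => hne h.1, fun h => hfin h.1⟩
    have hxtop : μ Z ^ (1/q) ≠ ∞ :=
      (ENNReal.rpow_lt_top_of_nonneg (by positivity) hfin).ne
    have := key (μ Z ^ (1/q)).toReal (ENNReal.toReal_pos hx0 hxtop)
    rw [ENNReal.ofReal_toReal hxtop] at this
    exact lt_irrefl _ this
  have hnm : ∀ᵐ θ ∂μ, θ ∉ Z := measure_eq_zero_iff_ae_notMem.mp hZ0
  filter_upwards [hnm, hbb'] with θ h1 h2
  rw [h2]; exact h1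

theorem partA (hP : IsCompact P) (hq : 1 ≤ q) (ha : Continuous a)
    (hb : MemLp b (ENNReal.ofReal q) (lebesgueOn P))
    (hr : LqEnsembleReachableScalar P q a b) :
    (∀ᵐ θ ∂(lebesgueOn P), b θ ≠ 0) ∧
      ∃ S : Set P, MeasurableSet S ∧ (lebesgueOn P) Sᶜ = 0 ∧ Set.InjOn a S := by
  set μ := lebesgueOn P with hμdef
  haveI : IsFiniteMeasure μ := lebesgueOn_finite hP
  have hq0 : 0 < q := lt_of_lt_of_le one_pos hq
  have hq'0 : (ENNReal.ofReal q) ≠ 0 := by simp [ENNReal.ofReal_eq_zero]; linarith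
  have hbne := bne_ae hP hq hb hr
  refine ⟨hbne, ?_⟩
  -- bound on P
  obtain ⟨C, hC⟩ := hP.isBounded.subset_closedBall 0
  have hCb : ∀ θ : P, ‖(θ : ℂ)‖ ≤ C := by
    intro θ
    have := hC θ.2
    simpa [Metric.mem_closedBall, Complex.dist_eq] using this
  set f₀ : P → ℂ := fun θ => (θ : ℂ) * b θ with hf₀def
  have hf₀m : AEStronglyMeasurable f₀ μ :=
    (continuous_subtype_val.aestronglyMeasurable).mul hb.aestronglyMeasurable
  have hf₀ : MemLp f₀ (ENNReal.ofReal q) μ := by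
    refine MemLp.of_le (hb.const_mul (C : ℂ)) hf₀m ?_
    refine Eventually.of_forall fun θ => ?_
    rw [norm_mul, norm_mul]
    apply mul_le_mul_of_nonneg_right _ (norm_nonneg _)
    calc ‖(θ:ℂ)‖ ≤ C := hCb θ
      _ ≤ ‖(C:ℂ)‖ := by rw [Complex.norm_real]; exact le_abs_self C
  have hex : ∀ n : ℕ, ∃ p : Polynomial ℂ,
      eLpNorm (fun θ => p.eval (a θ) * b θ - f₀ θ) (ENNReal.ofReal q) μ
        < ENNReal.ofReal (1/(n+1)) := fun n => hr f₀ hf₀ (1/(n+1)) (by positivity)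
  choose pn hpn using hex
  have htend : Tendsto (fun n => eLpNorm (fun θ => (pn n).eval (a θ) * b θ - f₀ θ)
      (ENNReal.ofReal q) μ) atTop (𝓝 0) := by
    have h1 : Tendsto (fun n : ℕ => ENNReal.ofReal (1/(n+1))) atTop (𝓝 0) := by
      rw [show (0:ℝ≥0∞) = ENNReal.ofReal 0 by simp]
      exact ENNReal.tendsto_ofReal tendsto_one_div_add_atTop_nhds_zero_nat
    exact tendsto_of_tendsto_of_tendsto_of_le_of_le tendsto_const_nhds h1
      (fun n => zero_le) (fun n => (hpn n).le)
  have hmeas : ∀ n, AEStronglyMeasurable (fun θ => (pn n).eval (a θ) * b θ) μ := fun n =>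
    ((((pn n).continuous).comp ha).aestronglyMeasurable).mul hb.aestronglyMeasurable
  have htim : TendstoInMeasure μ (fun n θ => (pn n).eval (a θ) * b θ) atTop f₀ := by
    apply tendstoInMeasure_of_tendsto_eLpNorm hq'0 hmeas hf₀m
    exact htend
  obtain ⟨ns, hns, hae⟩ := htim.exists_seq_tendsto_ae
  set T : Set P := {θ | Tendsto (fun i => (pn (ns i)).eval (a θ)) atTop (𝓝 (θ : ℂ))} with hTdef
  have haeT : ∀ᵐ θ ∂μ, θ ∈ T := by
    filter_upwards [hae, hbne] with θ h1 h2
    have h3 : Tendsto (fun i => (pn (ns i)).eval (a θ) * b θ * (b θ)⁻¹) atTop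
        (𝓝 (f₀ θ * (b θ)⁻¹)) := h1.mul_const _
    have h4 : f₀ θ * (b θ)⁻¹ = (θ : ℂ) := by
      field_simp [hf₀def]
      rw [hf₀def]; ring
    rw [h4] at h3
    refine h3.congr fun i => ?_
    field_simp
  have hT0 : μ Tᶜ = 0 := haeT
  have hTinj : Set.InjOn a T := by
    intro θ₁ h₁ θ₂ h₂ heq
    have h₁' : Tendsto (fun i => (pn (ns i)).eval (a θ₂)) atTop (𝓝 (θ₁ : ℂ)) := by
      rw [← heq]; exact h₁
    exact Subtype.ext (tendsto_nhds_unique h₁' h₂)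
  refine ⟨(toMeasurable μ Tᶜ)ᶜ, (measurableSet_toMeasurable μ Tᶜ).compl, ?_, ?_⟩
  · rw [compl_compl, measure_toMeasurable]; exact hT0
  · exact hTinj.mono (Set.compl_subset_comm.mp (subset_toMeasurable μ Tᶜ))



variable {P : Set ℂ} {q : ℝ} {a b : P → ℂ}

/-- The set of functions approximable by `p(a)·b`. -/
def V (P : Set ℂ) (q : ℝ) (a b : P → ℂ) : Set (P → ℂ) :=
  {f | ∀ ε : ℝ, 0 < ε → ∃ p : Polynomial ℂ,
    eLpNorm (fun θ => p.eval (a θ) * b θ - f θ) (ENNReal.ofReal q) (lebesgueOn P)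
      < ENNReal.ofReal ε}

lemma mem_V_poly (p : Polynomial ℂ) : (fun θ => p.eval (a θ) * b θ) ∈ V P q a b := by
  intro ε hε
  refine ⟨p, ?_⟩
  simp only [sub_self]
  rw [eLpNorm_zero']
  exact ENNReal.ofReal_pos.mpr hε

lemma V_congr {f g : P → ℂ} (hfg : f =ᵐ[lebesgueOn P] g) (hf : f ∈ V P q a b) :
    g ∈ V P q a b := by
  intro ε hε
  obtain ⟨p, hp⟩ := hf ε hε
  refine ⟨p, ?_⟩
  have : eLpNorm (fun θ => p.eval (a θ) * b θ - g θ) (ENNReal.ofReal q) (lebesgueOn P)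
      = eLpNorm (fun θ => p.eval (a θ) * b θ - f θ) (ENNReal.ofReal q) (lebesgueOn P) := by
    apply eLpNorm_congr_ae
    filter_upwards [hfg] with θ hθ
    rw [hθ]
  rwa [this]

lemma V_approx (hq : 1 ≤ q) (hb : AEStronglyMeasurable b (lebesgueOn P)) (ha : Continuous a)
    {f : P → ℂ} (hfm : AEStronglyMeasurable f (lebesgueOn P))
    (h : ∀ δ : ℝ, 0 < δ → ∃ F : P → ℂ, F ∈ V P q a b ∧
      AEStronglyMeasurable F (lebesgueOn P) ∧
      eLpNorm (fun θ => F θ - f θ) (ENNReal.ofReal q) (lebesgueOn P) ≤ ENNReal.ofReal δ) :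
    f ∈ V P q a b := by
  intro ε hε
  obtain ⟨F, hFV, hFm, hFf⟩ := h (ε/2) (by positivity)
  obtain ⟨p, hp⟩ := hFV (ε/2) (by positivity)
  refine ⟨p, ?_⟩
  have hq1 : (1:ℝ≥0∞) ≤ ENNReal.ofReal q := by
    rw [← ENNReal.ofReal_one]; exact ENNReal.ofReal_le_ofReal hq
  have hsplit : (fun θ => p.eval (a θ) * b θ - f θ)
      = (fun θ => p.eval (a θ) * b θ - F θ) + (fun θ => F θ - f θ) := by
    funext θ; simp only [Pi.add_apply]; ring
  have hm1 : AEStronglyMeasurable (fun θ => p.eval (a θ) * b θ - F θ) (lebesgueOn P) :=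
    ((p.continuous.comp ha).aestronglyMeasurable.mul hb).sub hFm
  have hm2 : AEStronglyMeasurable (fun θ => F θ - f θ) (lebesgueOn P) := hFm.sub hfm
  calc eLpNorm (fun θ => p.eval (a θ) * b θ - f θ) (ENNReal.ofReal q) (lebesgueOn P)
      ≤ eLpNorm (fun θ => p.eval (a θ) * b θ - F θ) (ENNReal.ofReal q) (lebesgueOn P)
        + eLpNorm (fun θ => F θ - f θ) (ENNReal.ofReal q) (lebesgueOn P) := by
        rw [hsplit]; exact eLpNorm_add_le hm1 hm2 hq1
    _ ≤ eLpNorm (fun θ => p.eval (a θ) * b θ - F θ) (ENNReal.ofReal q) (lebesgueOn P)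
        + ENNReal.ofReal (ε/2) := add_le_add_right hFf _
    _ < ENNReal.ofReal (ε/2) + ENNReal.ofReal (ε/2) :=
        ENNReal.add_lt_add_right ENNReal.ofReal_ne_top hp
    _ = ENNReal.ofReal ε := by
        rw [← ENNReal.ofReal_add (by positivity) (by positivity)]
        norm_num

lemma V_add (hq : 1 ≤ q) (hb : AEStronglyMeasurable b (lebesgueOn P)) (ha : Continuous a)
    {f g : P → ℂ} (hf : f ∈ V P q a b) (hg : g ∈ V P q a b)
    (hfm : AEStronglyMeasurable f (lebesgueOn P))
    (hgm : AEStronglyMeasurable g (lebesgueOn P)) :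
    (fun θ => f θ + g θ) ∈ V P q a b := by
  intro ε hε
  obtain ⟨p₁, hp₁⟩ := hf (ε/2) (by positivity)
  obtain ⟨p₂, hp₂⟩ := hg (ε/2) (by positivity)
  refine ⟨p₁ + p₂, ?_⟩
  have hq1 : (1:ℝ≥0∞) ≤ ENNReal.ofReal q := by
    rw [← ENNReal.ofReal_one]; exact ENNReal.ofReal_le_ofReal hq
  have hsplit : (fun θ => (p₁ + p₂).eval (a θ) * b θ - (f θ + g θ))
      = (fun θ => p₁.eval (a θ) * b θ - f θ) + (fun θ => p₂.eval (a θ) * b θ - g θ) := by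
    funext θ; simp only [Pi.add_apply, eval_add]; ring
  have hm1 : AEStronglyMeasurable (fun θ => p₁.eval (a θ) * b θ - f θ) (lebesgueOn P) :=
    ((p₁.continuous.comp ha).aestronglyMeasurable.mul hb).sub hfm
  have hm2 : AEStronglyMeasurable (fun θ => p₂.eval (a θ) * b θ - g θ) (lebesgueOn P) :=
    ((p₂.continuous.comp ha).aestronglyMeasurable.mul hb).sub hgm
  calc eLpNorm (fun θ => (p₁ + p₂).eval (a θ) * b θ - (f θ + g θ)) (ENNReal.ofReal q)
        (lebesgueOn P)
      ≤ eLpNorm (fun θ => p₁.eval (a θ) * b θ - f θ) (ENNReal.ofReal q) (lebesgueOn P)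
        + eLpNorm (fun θ => p₂.eval (a θ) * b θ - g θ) (ENNReal.ofReal q) (lebesgueOn P) := by
        rw [hsplit]; exact eLpNorm_add_le hm1 hm2 hq1
    _ < ENNReal.ofReal (ε/2) + ENNReal.ofReal (ε/2) := by
        exact ENNReal.add_lt_add hp₁ hp₂
    _ = ENNReal.ofReal ε := by
        rw [← ENNReal.ofReal_add (by positivity) (by positivity)]
        norm_num

lemma V_smul {f : P → ℂ} (c : ℂ) (hf : f ∈ V P q a b) :
    (fun θ => c * f θ) ∈ V P q a b := by
  intro ε hε
  by_cases hc : c = 0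
  · refine ⟨0, ?_⟩
    simp only [hc, eval_zero, zero_mul, sub_self]
    rw [eLpNorm_zero']
    exact ENNReal.ofReal_pos.mpr hε
  · obtain ⟨p, hp⟩ := hf (ε / ‖c‖) (div_pos hε (norm_pos_iff.mpr hc))
    refine ⟨Polynomial.C c * p, ?_⟩
    have heq : (fun θ => (Polynomial.C c * p).eval (a θ) * b θ - c * f θ)
        = c • (fun θ => p.eval (a θ) * b θ - f θ) := by
      funext θ; simp only [Pi.smul_apply, smul_eq_mul, eval_mul, eval_C]; ring
    rw [heq, eLpNorm_const_smul]
    calc (‖c‖₊ : ℝ≥0∞) * eLpNorm (fun θ => p.eval (a θ) * b θ - f θ) (ENNReal.ofReal q)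
          (lebesgueOn P)
        < (‖c‖₊ : ℝ≥0∞) * ENNReal.ofReal (ε / ‖c‖) := by
          apply ENNReal.mul_lt_mul_iff_right ?_ ?_ |>.mpr hp
          · simpa using hc
          · exact ENNReal.coe_ne_top
      _ = ENNReal.ofReal ε := by
          rw [← ofReal_norm_eq_coe_nnnorm, ← ENNReal.ofReal_mul (norm_nonneg c)]
          rw [mul_div_cancel₀ _ (by simpa using hc)]


lemma V_mul (hq : 1 ≤ q) (hb : AEStronglyMeasurable b (lebesgueOn P)) (ha : Continuous a)
    {m : P → ℂ} (hm : AEStronglyMeasurable m (lebesgueOn P)) {M : ℝ}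
    (hM : ∀ θ, ‖m θ‖ ≤ M)
    (hgen : ∀ p : Polynomial ℂ, (fun θ => m θ * (p.eval (a θ) * b θ)) ∈ V P q a b)
    {f : P → ℂ} (hf : f ∈ V P q a b) (hfm : AEStronglyMeasurable f (lebesgueOn P)) :
    (fun θ => m θ * f θ) ∈ V P q a b := by
  apply V_approx hq hb ha (hm.mul hfm)
  intro δ hδ
  set M' : ℝ := |M| + 1 with hM'def
  have hM' : 0 < M' := by positivity
  obtain ⟨p, hp⟩ := hf (δ / M') (div_pos hδ hM')
  refine ⟨fun θ => m θ * (p.eval (a θ) * b θ), hgen p,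
    hm.mul ((p.continuous.comp ha).aestronglyMeasurable.mul hb), ?_⟩
  show eLpNorm (fun θ => m θ * (p.eval (a θ) * b θ) - m θ * f θ) (ENNReal.ofReal q)
      (lebesgueOn P) ≤ ENNReal.ofReal δ
  have heq : (fun θ => m θ * (p.eval (a θ) * b θ) - m θ * f θ)
      = fun θ => m θ * (p.eval (a θ) * b θ - f θ) := by
    funext θ; ring
  rw [heq]
  have hmono : eLpNorm (fun θ => m θ * (p.eval (a θ) * b θ - f θ)) (ENNReal.ofReal q)
      (lebesgueOn P) ≤ eLpNorm ((M' : ℂ) • fun θ => p.eval (a θ) * b θ - f θ)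
      (ENNReal.ofReal q) (lebesgueOn P) := by
    apply eLpNorm_mono_ae
    refine Eventually.of_forall fun θ => ?_
    simp only [Pi.smul_apply, smul_eq_mul, norm_mul]
    apply mul_le_mul_of_nonneg_right _ (norm_nonneg _)
    calc ‖m θ‖ ≤ M := hM θ
      _ ≤ M' := by rw [hM'def]; have := le_abs_self M; linarith
      _ ≤ ‖(M' : ℂ)‖ := by rw [Complex.norm_real]; exact le_abs_self M'
  refine hmono.trans ?_
  rw [eLpNorm_const_smul]
  calc (‖(M' : ℂ)‖₊ : ℝ≥0∞) * eLpNorm (fun θ => p.eval (a θ) * b θ - f θ)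
        (ENNReal.ofReal q) (lebesgueOn P)
      ≤ ENNReal.ofReal M' * ENNReal.ofReal (δ / M') := by
        apply mul_le_mul' _ hp.le
        rw [← ofReal_norm_eq_coe_nnnorm, Complex.norm_real, Real.norm_eq_abs, abs_of_pos hM']
    _ = ENNReal.ofReal δ := by
        rw [← ENNReal.ofReal_mul hM'.le, mul_div_cancel₀ _ hM'.ne']


lemma V_mul_a (hP : IsCompact P) (hq : 1 ≤ q)
    (hb : AEStronglyMeasurable b (lebesgueOn P)) (ha : Continuous a)
    {f : P → ℂ} (hf : f ∈ V P q a b) (hfm : AEStronglyMeasurable f (lebesgueOn P)) :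
    (fun θ => a θ * f θ) ∈ V P q a b := by
  haveI : CompactSpace P := isCompact_iff_compactSpace.mp hP
  obtain ⟨M, hM⟩ := (isCompact_range ha).isBounded.subset_closedBall 0
  have hMb : ∀ θ : P, ‖a θ‖ ≤ M := by
    intro θ
    have := hM (Set.mem_range_self θ)
    simpa [Metric.mem_closedBall, Complex.dist_eq] using this
  apply V_mul hq hb ha ha.aestronglyMeasurable hMb _ hf hfm
  intro p
  have heq : (fun θ => a θ * (p.eval (a θ) * b θ))
      = fun θ => (X * p).eval (a θ) * b θ := by
    funext θ; simp only [eval_mul, eval_X]; ring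
  rw [heq]
  exact mem_V_poly _

lemma V_mulPoly (hP : IsCompact P) (hq : 1 ≤ q)
    (hb : AEStronglyMeasurable b (lebesgueOn P)) (ha : Continuous a)
    {f : P → ℂ} (hf : f ∈ V P q a b) (hfm : AEStronglyMeasurable f (lebesgueOn P)) :
    ∀ p : Polynomial ℂ, (fun θ => p.eval (a θ) * f θ) ∈ V P q a b := by
  intro p
  induction p using Polynomial.induction_on with
  | C c =>
    have := V_smul (b := b) (q := q) c hf
    simpa [eval_C] using this
  | add r s hr hs =>
    have heq : (fun θ => (r + s).eval (a θ) * f θ)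
        = fun θ => r.eval (a θ) * f θ + s.eval (a θ) * f θ := by
      funext θ; simp only [eval_add]; ring
    rw [heq]
    exact V_add hq hb ha hr hs
      ((r.continuous.comp ha).aestronglyMeasurable.mul hfm)
      ((s.continuous.comp ha).aestronglyMeasurable.mul hfm)
  | monomial n c hmon =>
    have heq : (fun θ => (C c * X ^ (n + 1)).eval (a θ) * f θ)
        = fun θ => a θ * ((C c * X ^ n).eval (a θ) * f θ) := by
      funext θ; simp only [eval_mul, eval_C, eval_pow, eval_X, pow_succ]; ring
    rw [heq]
    exact V_mul_a hP hq hb ha hmon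
      (((C c * X ^ n).continuous.comp ha).aestronglyMeasurable.mul hfm)


lemma memLp_cmul (hP : IsCompact P) {c : P → ℂ} (hc : Continuous c)
    (hb : MemLp b (ENNReal.ofReal q) (lebesgueOn P)) :
    MemLp (fun θ => c θ * b θ) (ENNReal.ofReal q) (lebesgueOn P) := by
  haveI : CompactSpace P := isCompact_iff_compactSpace.mp hP
  obtain ⟨M, hM⟩ := (isCompact_range hc).isBounded.subset_closedBall 0
  have hMb : ∀ θ : P, ‖c θ‖ ≤ |M| := by
    intro θ
    have := hM (Set.mem_range_self θ)
    simp only [Metric.mem_closedBall, Complex.dist_eq, sub_zero] at this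
    exact this.trans (le_abs_self M)
  refine MemLp.of_le (hb.const_mul ((|M| : ℝ) : ℂ))
    (hc.aestronglyMeasurable.mul hb.aestronglyMeasurable)
    (Eventually.of_forall fun θ => ?_)
  rw [norm_mul, norm_mul, Complex.norm_real, Real.norm_eq_abs, abs_abs]
  exact mul_le_mul_of_nonneg_right (hMb θ) (norm_nonneg _)

lemma conj_mem_V (hP : IsCompact P) (hq : 1 ≤ q) (ha : Continuous a)
    (hb : MemLp b (ENNReal.ofReal q) (lebesgueOn P))
    (hconj : ∀ ε : ℝ, 0 < ε → ∃ p : Polynomial ℂ,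
      (∫ θ, ‖p.eval (a θ) * b θ - (starRingEnd ℂ) (a θ) * b θ‖ ^ q ∂(lebesgueOn P)) < ε) :
    (fun θ => (starRingEnd ℂ) (a θ) * b θ) ∈ V P q a b := by
  have hq0 : 0 < q := lt_of_lt_of_le one_pos hq
  have hq'0 : (ENNReal.ofReal q) ≠ 0 := by simp [ENNReal.ofReal_eq_zero]; linarith
  have hq'top : ENNReal.ofReal q ≠ ⊤ := ENNReal.ofReal_ne_top
  have htq : (ENNReal.ofReal q).toReal = q := ENNReal.toReal_ofReal hq0.le
  intro ε hε
  have hεq : 0 < ε ^ q := Real.rpow_pos_of_pos hε q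
  obtain ⟨p, hI⟩ := hconj (ε ^ q) hεq
  refine ⟨p, ?_⟩
  set G : P → ℂ := fun θ => p.eval (a θ) * b θ - (starRingEnd ℂ) (a θ) * b θ with hGdef
  have hconjC : Continuous fun θ : P => (starRingEnd ℂ) (a θ) :=
    Complex.continuous_conj.comp ha
  have hGmem : MemLp G (ENNReal.ofReal q) (lebesgueOn P) :=
    (memLp_cmul hP (p.continuous.comp ha) hb).sub (memLp_cmul hP hconjC hb)
  have hInt : Integrable (fun θ => ‖G θ‖ ^ q) (lebesgueOn P) := by
    have := hGmem.integrable_norm_rpow hq'0 hq'top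
    rwa [htq] at this
  have h1 : ENNReal.ofReal (∫ θ, ‖G θ‖ ^ q ∂(lebesgueOn P))
      = ∫⁻ θ, ENNReal.ofReal (‖G θ‖ ^ q) ∂(lebesgueOn P) :=
    ofReal_integral_eq_lintegral_ofReal hInt
      (Eventually.of_forall fun θ => by positivity)
  have h2 : ∀ θ : P, ENNReal.ofReal (‖G θ‖ ^ q) = (‖G θ‖₊ : ℝ≥0∞) ^ q := fun θ => by
    rw [← ofReal_norm_eq_coe_nnnorm, ← ENNReal.ofReal_rpow_of_nonneg (norm_nonneg _) hq0.le]
  have heLp : eLpNorm G (ENNReal.ofReal q) (lebesgueOn P)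
      = (ENNReal.ofReal (∫ θ, ‖G θ‖ ^ q ∂(lebesgueOn P))) ^ (1/q) := by
    rw [eLpNorm_eq_lintegral_rpow_nnnorm hq'0 hq'top, htq, h1]
    congr 1
    exact lintegral_congr fun θ => (h2 θ).symm
  show eLpNorm G (ENNReal.ofReal q) (lebesgueOn P) < ENNReal.ofReal ε
  rw [heLp]
  calc (ENNReal.ofReal (∫ θ, ‖G θ‖ ^ q ∂(lebesgueOn P))) ^ (1/q)
      < (ENNReal.ofReal (ε ^ q)) ^ (1/q) := by
        apply ENNReal.rpow_lt_rpow _ (by positivity)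
        exact (ENNReal.ofReal_lt_ofReal_iff hεq).mpr hI
    _ = ENNReal.ofReal ε := by
        rw [ENNReal.ofReal_rpow_of_nonneg hεq.le (by positivity : (0:ℝ) ≤ 1/q),
          ← Real.rpow_mul hε.le, mul_one_div_cancel hq0.ne', Real.rpow_one]


lemma V_contMap (hP : IsCompact P) (hq : 1 ≤ q) (ha : Continuous a)
    (hb : MemLp b (ENNReal.ofReal q) (lebesgueOn P))
    (hconjV : (fun θ => (starRingEnd ℂ) (a θ) * b θ) ∈ V P q a b) :
    ∀ e : C(Set.range a, ℂ), ∀ p : Polynomial ℂ,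
      (fun θ => e ⟨a θ, Set.mem_range_self θ⟩ * (p.eval (a θ) * b θ)) ∈ V P q a b := by
  haveI : CompactSpace P := isCompact_iff_compactSpace.mp hP
  haveI : CompactSpace (Set.range a) := isCompact_iff_compactSpace.mp (isCompact_range ha)
  have hcont : ∀ e : C(Set.range a, ℂ), Continuous fun θ : P => e ⟨a θ, Set.mem_range_self θ⟩ :=
    fun e => e.continuous.comp (ha.subtype_mk _)
  intro e
  induction e using ContinuousMap.induction_on_of_compact with
  | const r =>
    intro p
    have heq : (fun θ : P => (ContinuousMap.const (Set.range a) r) ⟨a θ, Set.mem_range_self θ⟩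
        * (p.eval (a θ) * b θ)) = fun θ => (C r * p).eval (a θ) * b θ := by
      funext θ; simp only [ContinuousMap.const_apply, eval_mul, eval_C]; ring
    rw [heq]; exact mem_V_poly _
  | id =>
    intro p
    have heq : (fun θ : P => (ContinuousMap.restrict (Set.range a) (ContinuousMap.id ℂ))
        ⟨a θ, Set.mem_range_self θ⟩ * (p.eval (a θ) * b θ))
        = fun θ => (X * p).eval (a θ) * b θ := by
      funext θ
      simp only [ContinuousMap.restrict_apply, ContinuousMap.id_apply, eval_mul, eval_X]
      ring
    rw [heq]; exact mem_V_poly _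
  | star_id =>
    intro p
    have heq : (fun θ : P => (star (ContinuousMap.restrict (Set.range a) (ContinuousMap.id ℂ)))
        ⟨a θ, Set.mem_range_self θ⟩ * (p.eval (a θ) * b θ))
        = fun θ => p.eval (a θ) * ((starRingEnd ℂ) (a θ) * b θ) := by
      funext θ
      simp only [ContinuousMap.star_apply, ContinuousMap.restrict_apply, ContinuousMap.id_apply,
        Complex.star_def]
      ring
    rw [heq]
    exact V_mulPoly hP hq hb.aestronglyMeasurable ha hconjV
      (((Complex.continuous_conj.comp ha).aestronglyMeasurable).mul hb.aestronglyMeasurable) p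
  | add e₁ e₂ h₁ h₂ =>
    intro p
    have heq : (fun θ : P => (e₁ + e₂) ⟨a θ, Set.mem_range_self θ⟩ * (p.eval (a θ) * b θ))
        = fun θ => e₁ ⟨a θ, Set.mem_range_self θ⟩ * (p.eval (a θ) * b θ)
          + e₂ ⟨a θ, Set.mem_range_self θ⟩ * (p.eval (a θ) * b θ) := by
      funext θ; simp only [ContinuousMap.add_apply]; ring
    rw [heq]
    exact V_add hq hb.aestronglyMeasurable ha (h₁ p) (h₂ p)
      ((hcont e₁).aestronglyMeasurable.mul
        (((p.continuous.comp ha).aestronglyMeasurable).mul hb.aestronglyMeasurable))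
      ((hcont e₂).aestronglyMeasurable.mul
        (((p.continuous.comp ha).aestronglyMeasurable).mul hb.aestronglyMeasurable))
  | mul e₁ e₂ h₁ h₂ =>
    intro p
    have heq : (fun θ : P => (e₁ * e₂) ⟨a θ, Set.mem_range_self θ⟩ * (p.eval (a θ) * b θ))
        = fun θ => e₁ ⟨a θ, Set.mem_range_self θ⟩
          * (e₂ ⟨a θ, Set.mem_range_self θ⟩ * (p.eval (a θ) * b θ)) := by
      funext θ; simp only [ContinuousMap.mul_apply]; ring
    rw [heq]
    exact V_mul hq hb.aestronglyMeasurable ha (hcont e₁).aestronglyMeasurable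
      (fun θ => e₁.norm_coe_le_norm _) h₁ (h₂ p)
      ((hcont e₂).aestronglyMeasurable.mul
        (((p.continuous.comp ha).aestronglyMeasurable).mul hb.aestronglyMeasurable))
  | frequently e hfreq =>
    intro p
    apply V_approx hq hb.aestronglyMeasurable ha
      ((hcont e).aestronglyMeasurable.mul
        (((p.continuous.comp ha).aestronglyMeasurable).mul hb.aestronglyMeasurable))
    intro δ hδ
    set B : ℝ≥0∞ := eLpNorm (fun θ => p.eval (a θ) * b θ) (ENNReal.ofReal q) (lebesgueOn P)
      with hBdef
    have hBtop : B ≠ ⊤ := (memLp_cmul hP (p.continuous.comp ha) hb).2.ne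
    set η : ℝ := δ / (B.toReal + 1) with hηdef
    have hB0 : 0 ≤ B.toReal := ENNReal.toReal_nonneg
    have hη : 0 < η := by positivity
    obtain ⟨g, hgQ, hgd⟩ := (hfreq.and_eventually (Metric.ball_mem_nhds e hη)).exists
    refine ⟨fun θ => g ⟨a θ, Set.mem_range_self θ⟩ * (p.eval (a θ) * b θ), hgQ p,
      (hcont g).aestronglyMeasurable.mul
        (((p.continuous.comp ha).aestronglyMeasurable).mul hb.aestronglyMeasurable), ?_⟩
    have hd : dist g e < η := Metric.mem_ball.mp hgd
    have hmono : eLpNorm (fun θ => g ⟨a θ, Set.mem_range_self θ⟩ * (p.eval (a θ) * b θ)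
        - e ⟨a θ, Set.mem_range_self θ⟩ * (p.eval (a θ) * b θ)) (ENNReal.ofReal q)
        (lebesgueOn P)
        ≤ eLpNorm ((η : ℂ) • fun θ => p.eval (a θ) * b θ) (ENNReal.ofReal q) (lebesgueOn P) := by
      apply eLpNorm_mono_ae
      refine Eventually.of_forall fun θ => ?_
      rw [← sub_mul]
      simp only [Pi.smul_apply, smul_eq_mul, norm_mul]
      apply mul_le_mul_of_nonneg_right _ (by positivity)
      calc ‖g ⟨a θ, Set.mem_range_self θ⟩ - e ⟨a θ, Set.mem_range_self θ⟩‖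
          = dist (g ⟨a θ, Set.mem_range_self θ⟩) (e ⟨a θ, Set.mem_range_self θ⟩) := by
            rw [dist_eq_norm]
        _ ≤ dist g e := ContinuousMap.dist_apply_le_dist _
        _ ≤ η := hd.le
        _ ≤ ‖(η : ℂ)‖ := by rw [Complex.norm_real, Real.norm_eq_abs]; exact le_abs_self η
    refine hmono.trans ?_
    rw [eLpNorm_const_smul]
    calc (‖(η : ℂ)‖₊ : ℝ≥0∞) * B ≤ ENNReal.ofReal η * ENNReal.ofReal (B.toReal + 1) := by
          apply mul_le_mul'
          · rw [← ofReal_norm_eq_coe_nnnorm, Complex.norm_real, Real.norm_eq_abs,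
              abs_of_pos hη]
          · calc B = ENNReal.ofReal B.toReal := (ENNReal.ofReal_toReal hBtop).symm
              _ ≤ ENNReal.ofReal (B.toReal + 1) := ENNReal.ofReal_le_ofReal (by linarith)
      _ = ENNReal.ofReal δ := by
          rw [← ENNReal.ofReal_mul hη.le, hηdef, div_mul_cancel₀ _ (by positivity)]


section Level2

variable (hP : IsCompact P) (hq : 1 ≤ q) (ha : Continuous a)
  (hb : MemLp b (ENNReal.ofReal q) (lebesgueOn P))

/-- Pushforward of the `|b|^q`-weighted measure under `a`. -/
noncomputable def nu (P : Set ℂ) (q : ℝ) (a b : P → ℂ) (b' : P → ℂ) : Measure ℂ :=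
  ((lebesgueOn P).withDensity (fun θ => (‖b' θ‖₊ : ℝ≥0∞) ^ q)).map a

lemma eLpNorm_transfer (hq : 1 ≤ q) (ha : Continuous a) {b' : P → ℂ} (hb' : Measurable b')
    (hbb' : b =ᵐ[lebesgueOn P] b') (ψ : ℂ → ℂ) (hψ : Measurable ψ) :
    eLpNorm (fun θ => ψ (a θ) * b θ) (ENNReal.ofReal q) (lebesgueOn P)
      = eLpNorm ψ (ENNReal.ofReal q) (nu P q a b b') := by
  have hq0 : 0 < q := lt_of_lt_of_le one_pos hq
  have hq'0 : (ENNReal.ofReal q) ≠ 0 := by simp [ENNReal.ofReal_eq_zero]; linarith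
  have hq'top : ENNReal.ofReal q ≠ ⊤ := ENNReal.ofReal_ne_top
  have htq : (ENNReal.ofReal q).toReal = q := ENNReal.toReal_ofReal hq0.le
  rw [eLpNorm_eq_lintegral_rpow_nnnorm hq'0 hq'top, eLpNorm_eq_lintegral_rpow_nnnorm hq'0 hq'top,
    htq]
  congr 1
  have hmeas : Measurable fun y : ℂ => (‖ψ y‖₊ : ℝ≥0∞) ^ q :=
    (hψ.nnnorm.coe_nnreal_ennreal).pow_const q
  calc ∫⁻ θ, (‖ψ (a θ) * b θ‖₊ : ℝ≥0∞) ^ q ∂(lebesgueOn P)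
      = ∫⁻ θ, (‖b' θ‖₊ : ℝ≥0∞) ^ q * (‖ψ (a θ)‖₊ : ℝ≥0∞) ^ q ∂(lebesgueOn P) := by
        apply lintegral_congr_ae
        filter_upwards [hbb'] with θ hθ
        rw [hθ, nnnorm_mul, ENNReal.coe_mul, ENNReal.mul_rpow_of_nonneg _ _ hq0.le, mul_comm]
    _ = ∫⁻ θ, (‖ψ (a θ)‖₊ : ℝ≥0∞) ^ q
          ∂((lebesgueOn P).withDensity (fun θ => (‖b' θ‖₊ : ℝ≥0∞) ^ q)) := by
        rw [lintegral_withDensity_eq_lintegral_mul (lebesgueOn P)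
          ((hb'.nnnorm.coe_nnreal_ennreal).pow_const q)
          (show Measurable fun θ : P => (‖ψ (a θ)‖₊ : ℝ≥0∞) ^ q from
            hmeas.comp ha.measurable)]
        rfl
    _ = ∫⁻ y, (‖ψ y‖₊ : ℝ≥0∞) ^ q ∂(nu P q a b b') := by
        rw [nu, lintegral_map hmeas ha.measurable]

include hP hq ha hb in
lemma V_measBounded
    (hconjV : (fun θ => (starRingEnd ℂ) (a θ) * b θ) ∈ V P q a b)
    {b' : P → ℂ} (hb' : Measurable b') (hbb' : b =ᵐ[lebesgueOn P] b')
    (φ : ℂ → ℂ) (hφ : Measurable φ) {Cb : ℝ} (hφC : ∀ y, ‖φ y‖ ≤ Cb) :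
    (fun θ => φ (a θ) * b θ) ∈ V P q a b := by
  have hq0 : 0 < q := lt_of_lt_of_le one_pos hq
  have hq'0 : (ENNReal.ofReal q) ≠ 0 := by simp [ENNReal.ofReal_eq_zero]; linarith
  have hq'top : ENNReal.ofReal q ≠ ⊤ := ENNReal.ofReal_ne_top
  have htq : (ENNReal.ofReal q).toReal = q := ENNReal.toReal_ofReal hq0.le
  -- finiteness of the weighted pushforward measure
  have hfin : ∫⁻ θ, (‖b' θ‖₊ : ℝ≥0∞) ^ q ∂(lebesgueOn P) < ⊤ := by
    have h1 : ∫⁻ θ, (‖b' θ‖₊ : ℝ≥0∞) ^ q ∂(lebesgueOn P)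
        = ∫⁻ θ, (‖b θ‖₊ : ℝ≥0∞) ^ q ∂(lebesgueOn P) := by
      apply lintegral_congr_ae
      filter_upwards [hbb'] with θ hθ
      rw [hθ]
    rw [h1]
    have h2 := hb.eLpNorm_lt_top
    rw [eLpNorm_eq_lintegral_rpow_nnnorm hq'0 hq'top, htq] at h2
    by_contra hcon
    push_neg at hcon
    have : (∫⁻ θ, (‖b θ‖₊ : ℝ≥0∞) ^ q ∂(lebesgueOn P)) = ⊤ := top_le_iff.mp hcon
    rw [this, ENNReal.top_rpow_of_pos (by positivity : (0:ℝ) < 1/q)] at h2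
    exact lt_irrefl _ h2
  haveI hνfin : IsFiniteMeasure (nu P q a b b') := by
    constructor
    rw [nu, Measure.map_apply ha.measurable MeasurableSet.univ, Set.preimage_univ,
      withDensity_apply _ MeasurableSet.univ]
    simpa using hfin
  have hφLp : MemLp φ (ENNReal.ofReal q) (nu P q a b b') :=
    MemLp.of_bound hφ.stronglyMeasurable.aestronglyMeasurable Cb
      (Eventually.of_forall hφC)
  apply V_approx hq hb.aestronglyMeasurable ha
    (show AEStronglyMeasurable (fun θ => φ (a θ) * b θ) (lebesgueOn P) from
      (((hφ.comp ha.measurable).stronglyMeasurable.aestronglyMeasurable).mul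
        hb.aestronglyMeasurable))
  intro δ hδ
  obtain ⟨g, hgle, hgLp⟩ := hφLp.exists_boundedContinuous_eLpNorm_sub_le hq'top
    (ε := ENNReal.ofReal δ) (by simp [ENNReal.ofReal_eq_zero]; linarith)
  refine ⟨fun θ => g (a θ) * b θ, ?_, ?_, ?_⟩
  · -- bounded continuous g : via Stone-Weierstrass machinery
    have := V_contMap hP hq ha hb hconjV
      ((g.toContinuousMap).restrict (Set.range a)) 1
    have heq : (fun θ : P => ((g.toContinuousMap).restrict (Set.range a))
        ⟨a θ, Set.mem_range_self θ⟩ * ((1 : Polynomial ℂ).eval (a θ) * b θ))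
        = fun θ => g (a θ) * b θ := by
      funext θ
      simp only [ContinuousMap.restrict_apply, eval_one, one_mul]
      rfl
    rwa [heq] at this
  · exact ((g.continuous.comp ha).aestronglyMeasurable).mul hb.aestronglyMeasurable
  · have heq2 : (fun θ : P => g (a θ) * b θ - φ (a θ) * b θ)
        = fun θ : P => (g (a θ) - φ (a θ)) * b θ := by
      funext θ; ring
    show eLpNorm (fun θ : P => g (a θ) * b θ - φ (a θ) * b θ) (ENNReal.ofReal q)
      (lebesgueOn P) ≤ ENNReal.ofReal δ
    have ht := eLpNorm_transfer (b := b) hq ha hb' hbb' ((g : ℂ → ℂ) - φ)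
      (g.continuous.measurable.sub hφ)
    simp only [Pi.sub_apply] at ht
    rw [heq2, ht]
    have : eLpNorm ((g : ℂ → ℂ) - φ) (ENNReal.ofReal q) (nu P q a b b')
        = eLpNorm (φ - (g : ℂ → ℂ)) (ENNReal.ofReal q) (nu P q a b b') :=
      eLpNorm_sub_comm _ _ _ _
    rw [this]
    exact hgle

end Level2

theorem partB (hP : IsCompact P) (hq : 1 ≤ q) (ha : Continuous a)
    (hb : MemLp b (ENNReal.ofReal q) (lebesgueOn P))
    (hS : ∃ S : Set P, MeasurableSet S ∧ (lebesgueOn P) Sᶜ = 0 ∧ Set.InjOn a S)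
    (hbne : ∀ᵐ θ ∂(lebesgueOn P), b θ ≠ 0)
    (hconj : ∀ ε : ℝ, 0 < ε → ∃ p : Polynomial ℂ,
      (∫ θ, ‖p.eval (a θ) * b θ - (starRingEnd ℂ) (a θ) * b θ‖ ^ q ∂(lebesgueOn P)) < ε) :
    LqEnsembleReachableScalar P q a b := by
  have hq0 : 0 < q := lt_of_lt_of_le one_pos hq
  have hq'0 : (ENNReal.ofReal q) ≠ 0 := by simp [ENNReal.ofReal_eq_zero]; linarith
  have hq'top : ENNReal.ofReal q ≠ ⊤ := ENNReal.ofReal_ne_top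
  have htq : (ENNReal.ofReal q).toReal = q := ENNReal.toReal_ofReal hq0.le
  haveI : IsFiniteMeasure (lebesgueOn P) := lebesgueOn_finite hP
  intro f hf ε hε
  suffices hfV : f ∈ V P q a b from hfV ε hε
  obtain ⟨S, hSm, hSc, hSinj⟩ := hS
  obtain ⟨b', hb'sm, hbb'⟩ := hb.aestronglyMeasurable
  obtain ⟨f', hf'sm, hff'⟩ := hf.aestronglyMeasurable
  have hb'meas : Measurable b' := hb'sm.measurable
  have hf'meas : Measurable f' := hf'sm.measurable
  have hconjV : (fun θ => (starRingEnd ℂ) (a θ) * b θ) ∈ V P q a b :=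
    conj_mem_V hP hq ha hb hconj
  -- standard Borel structure
  haveI : PolishSpace P := hP.isClosed.polishSpace
  haveI : StandardBorelSpace S := hSm.standardBorel
  set e : S → ℂ := fun s => a s with hedef
  have hemeas : Measurable e := ha.measurable.comp measurable_subtype_coe
  have heinj : Function.Injective e := fun s t hst => Subtype.ext (hSinj s.2 t.2 hst)
  have hemb : MeasurableEmbedding e := hemeas.measurableEmbedding heinj
  have aeS : ∀ᵐ θ ∂(lebesgueOn P), θ ∈ S := by
    have := measure_eq_zero_iff_ae_notMem.mp hSc
    filter_upwards [this] with θ hθ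
    exact Set.not_notMem.mp hθ
  have hb'ne : ∀ᵐ θ ∂(lebesgueOn P), b' θ ≠ 0 := by
    filter_upwards [hbne, hbb'] with θ h1 h2
    rw [← h2]; exact h1
  -- truncations
  set h : P → ℂ := fun θ => f' θ * (b' θ)⁻¹ with hhdef
  have hhmeas : Measurable h := hf'meas.mul hb'meas.inv
  set hn : ℕ → P → ℂ := fun n => Set.indicator {θ | ‖h θ‖ ≤ (n : ℝ)} h with hndef
  have hnmeas : ∀ n, Measurable (hn n) := fun n =>
    hhmeas.indicator (measurableSet_le hhmeas.norm measurable_const)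
  have hnbound : ∀ n θ, ‖hn n θ‖ ≤ (n : ℝ) := by
    intro n θ
    by_cases hθ : θ ∈ {θ | ‖h θ‖ ≤ (n : ℝ)}
    · rw [hndef]; simp only [Set.indicator_of_mem hθ]; exact hθ
    · rw [hndef]; simp only [Set.indicator_of_notMem hθ, norm_zero]; positivity
  -- key: each truncation times b' is in V
  have hFnV : ∀ n, (fun θ => hn n θ * b' θ) ∈ V P q a b := by
    intro n
    set φ : ℂ → ℂ := Function.extend e (fun s => hn n ↑s) (fun _ => 0) with hφdef
    have hφmeas : Measurable φ :=
      hemb.measurable_extend ((hnmeas n).comp measurable_subtype_coe) measurable_const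
    have hφbound : ∀ y, ‖φ y‖ ≤ (n : ℝ) := by
      intro y
      classical
      rw [hφdef, Function.extend_def]
      split_ifs with hy
      · exact hnbound n _
      · simp
    have hInV : (fun θ => φ (a θ) * b θ) ∈ V P q a b :=
      V_measBounded hP hq ha hb hconjV hb'meas hbb' φ hφmeas hφbound
    apply V_congr _ hInV
    filter_upwards [aeS, hbb'] with θ hθS hθb
    show φ (a θ) * b θ = hn n θ * b' θ
    rw [← hθb]
    congr 1
    have : φ (e ⟨θ, hθS⟩) = hn n ↑(⟨θ, hθS⟩ : S) := heinj.extend_apply _ _ _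
    exact this
  -- the L^q distances tend to 0
  set F : ℕ → P → ℝ≥0∞ := fun n θ => (‖hn n θ * b' θ - f' θ‖₊ : ℝ≥0∞) ^ q with hFdef
  have hFn_le : ∀ n θ, ‖hn n θ * b' θ‖ ≤ ‖f' θ‖ := by
    intro n θ
    by_cases hbz : b' θ = 0
    · simp [hbz]
    by_cases hθ : θ ∈ {θ | ‖h θ‖ ≤ (n : ℝ)}
    · rw [hndef]
      simp only [Set.indicator_of_mem hθ]
      rw [hhdef]
      have : f' θ * (b' θ)⁻¹ * b' θ = f' θ := by field_simp
      rw [this]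
    · rw [hndef]
      simp only [Set.indicator_of_notMem hθ, zero_mul, norm_zero]
      positivity
  have hbound_ptwise : ∀ n θ, F n θ ≤ ((2 : ℝ≥0∞) * (‖f' θ‖₊ : ℝ≥0∞)) ^ q := by
    intro n θ
    apply ENNReal.rpow_le_rpow _ hq0.le
    have h2 : ‖hn n θ * b' θ - f' θ‖ ≤ 2 * ‖f' θ‖ := by
      have h3 := norm_sub_le (hn n θ * b' θ) (f' θ)
      have h4 := hFn_le n θ
      linarith
    calc (‖hn n θ * b' θ - f' θ‖₊ : ℝ≥0∞) = ENNReal.ofReal ‖hn n θ * b' θ - f' θ‖ :=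
          (ofReal_norm_eq_coe_nnnorm _).symm
      _ ≤ ENNReal.ofReal (2 * ‖f' θ‖) := ENNReal.ofReal_le_ofReal h2
      _ = 2 * (‖f' θ‖₊ : ℝ≥0∞) := by
          rw [ENNReal.ofReal_mul (by norm_num : (0:ℝ) ≤ 2), ofReal_norm_eq_coe_nnnorm]
          norm_num
  have hbfin : ∫⁻ θ, ((2 : ℝ≥0∞) * (‖f' θ‖₊ : ℝ≥0∞)) ^ q ∂(lebesgueOn P) ≠ ⊤ := by
    have hfq : ∫⁻ θ, (‖f' θ‖₊ : ℝ≥0∞) ^ q ∂(lebesgueOn P) < ⊤ := by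
      have h1 : ∫⁻ θ, (‖f' θ‖₊ : ℝ≥0∞) ^ q ∂(lebesgueOn P)
          = ∫⁻ θ, (‖f θ‖₊ : ℝ≥0∞) ^ q ∂(lebesgueOn P) := by
        apply lintegral_congr_ae
        filter_upwards [hff'] with θ hθ
        rw [hθ]
      rw [h1]
      have h2 := hf.eLpNorm_lt_top
      rw [eLpNorm_eq_lintegral_rpow_nnnorm hq'0 hq'top, htq] at h2
      by_contra hcon
      push_neg at hcon
      have h3 : (∫⁻ θ, (‖f θ‖₊ : ℝ≥0∞) ^ q ∂(lebesgueOn P)) = ⊤ := top_le_iff.mp hcon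
      rw [h3, ENNReal.top_rpow_of_pos (by positivity : (0:ℝ) < 1/q)] at h2
      exact lt_irrefl _ h2
    have heq : ∀ θ : P, ((2 : ℝ≥0∞) * (‖f' θ‖₊ : ℝ≥0∞)) ^ q
        = (2 : ℝ≥0∞) ^ q * (‖f' θ‖₊ : ℝ≥0∞) ^ q := fun θ =>
      ENNReal.mul_rpow_of_nonneg _ _ hq0.le
    rw [lintegral_congr heq, lintegral_const_mul _ ((hf'meas.nnnorm.coe_nnreal_ennreal).pow_const q)]
    exact (ENNReal.mul_lt_top (ENNReal.rpow_lt_top_of_nonneg hq0.le (by norm_num)) hfq).ne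
  have hlim : ∀ᵐ θ ∂(lebesgueOn P), Tendsto (fun n => F n θ) atTop (𝓝 0) := by
    filter_upwards [hb'ne] with θ hθ
    have hev : ∀ᶠ n in atTop, F n θ = 0 := by
      filter_upwards [eventually_ge_atTop ⌈‖h θ‖⌉₊] with n hne
      have hθn : θ ∈ {θ | ‖h θ‖ ≤ (n : ℝ)} := by
        have h1 : ‖h θ‖ ≤ (⌈‖h θ‖⌉₊ : ℝ) := Nat.le_ceil _
        have h2 : ((⌈‖h θ‖⌉₊ : ℕ) : ℝ) ≤ (n : ℝ) := Nat.cast_le.mpr hne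
        exact le_trans h1 h2
      have : hn n θ * b' θ = f' θ := by
        rw [hndef]
        simp only [Set.indicator_of_mem hθn]
        rw [hhdef]
        field_simp
      rw [hFdef]
      simp only [this, sub_self, nnnorm_zero, ENNReal.coe_zero]
      exact ENNReal.zero_rpow_of_pos hq0
    exact tendsto_const_nhds.congr' (hev.mono fun n hn => hn.symm)
  have htendsto : Tendsto (fun n => ∫⁻ θ, F n θ ∂(lebesgueOn P)) atTop (𝓝 0) := by
    have := tendsto_lintegral_of_dominated_convergence
      (fun θ => ((2 : ℝ≥0∞) * (‖f' θ‖₊ : ℝ≥0∞)) ^ q)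
      (fun n => (((hnmeas n).mul hb'meas).sub hf'meas).nnnorm.coe_nnreal_ennreal.pow_const q)
      (fun n => Eventually.of_forall (hbound_ptwise n)) hbfin hlim
    simpa using this
  -- final approximation
  apply V_approx hq hb.aestronglyMeasurable ha hf.aestronglyMeasurable
  intro δ hδ
  have hδq : (0 : ℝ≥0∞) < (ENNReal.ofReal δ) ^ q := by
    apply ENNReal.rpow_pos (ENNReal.ofReal_pos.mpr hδ) ENNReal.ofReal_ne_top
  obtain ⟨n, hn_lt⟩ := (htendsto.eventually_lt_const hδq).exists
  refine ⟨fun θ => hn n θ * b' θ, hFnV n, (((hnmeas n).mul hb'meas).stronglyMeasurable.aestronglyMeasurable), ?_⟩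
  have heqae : eLpNorm (fun θ => hn n θ * b' θ - f θ) (ENNReal.ofReal q) (lebesgueOn P)
      = eLpNorm (fun θ => hn n θ * b' θ - f' θ) (ENNReal.ofReal q) (lebesgueOn P) := by
    apply eLpNorm_congr_ae
    filter_upwards [hff'] with θ hθ
    rw [hθ]
  rw [heqae, eLpNorm_eq_lintegral_rpow_nnnorm hq'0 hq'top, htq]
  calc (∫⁻ θ, (‖hn n θ * b' θ - f' θ‖₊ : ℝ≥0∞) ^ q ∂(lebesgueOn P)) ^ (1/q)
      ≤ ((ENNReal.ofReal δ) ^ q) ^ (1/q) := by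
        apply ENNReal.rpow_le_rpow _ (by positivity)
        exact hn_lt.le
    _ = ENNReal.ofReal δ := by
        rw [← ENNReal.rpow_mul, mul_one_div_cancel hq0.ne', ENNReal.rpow_one]


end Stmt17

/-- (a) if the scalar pair `(a, b)` is `L^q`-ensemble reachable then `b` is
a.e. nonzero and `a` is essentially univalent (injective on a set of full measure);
(b) conversely, if `a` is essentially univalent, `b` is a.e. nonzero and the infimum over
polynomials `p` of `∫_P |p(a)b − conj(a) b|^q` is `0`, then `(a, b)` is `L^q`-ensemble
reachable. -/
theorem stmt_17 (P : Set ℂ) (hP : IsCompact P) (q : ℝ) (hq : 1 ≤ q)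
    (a : P → ℂ) (ha : Continuous a)
    (b : P → ℂ) (hb : MemLp b (ENNReal.ofReal q) (lebesgueOn P)) :
    (LqEnsembleReachableScalar P q a b →
      (∀ᵐ θ ∂(lebesgueOn P), b θ ≠ 0) ∧
      ∃ S : Set P, MeasurableSet S ∧ (lebesgueOn P) Sᶜ = 0 ∧ Set.InjOn a S) ∧
    (((∃ S : Set P, MeasurableSet S ∧ (lebesgueOn P) Sᶜ = 0 ∧ Set.InjOn a S) →
      (∀ᵐ θ ∂(lebesgueOn P), b θ ≠ 0) →
      (∀ ε : ℝ, 0 < ε → ∃ p : Polynomial ℂ,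
        (∫ θ, ‖p.eval (a θ) * b θ - (starRingEnd ℂ) (a θ) * b θ‖ ^ q ∂(lebesgueOn P)) < ε) →
      LqEnsembleReachableScalar P q a b)) := by
  constructor
  · intro hr
    exact Stmt17.partA hP hq ha hb hr
  · intro hS hbne hconj
    exact Stmt17.partB hP hq ha hb hS hbne hconj
end
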